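/- arXiv:2508.12004 — 6 statements merged into one kernel-verified Lean document; each statement's English description precedes it below -/
import Mathlib

section
/- Let H be a simple graph and let M be a uniquely restricted matching in the line graph L(H). Let E_M ⊆ E(H) be the set of edges of H that correspond to the M-saturated vertices of L(H). Then the edge-induced subgraph H[E_M] is a forest. -/
namespace URM

open SimpleGraph

variable {V : Type*}

/-- A matching (given as a subgraph all of whose vertices are matched) is *uniquely restricted*
if the subgraph induced on its saturated vertices has exactly one perfect matching, i.e. every
perfect matching of that induced subgraph equals `M`. -/
def IsUniquelyRestricted {G : SimpleGraph V} (M : G.Subgraph) : Prop :=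
  M.IsMatching ∧ ∀ M' : G.Subgraph, M'.verts = M.verts → M'.IsMatching → M' = M

/-- `a`, `b`, `c` are the successive vertices of a path of length 2 in `H` (with middle
vertex `b`). -/
def IsPath2 (H : SimpleGraph V) (a b c : V) : Prop :=
  H.Adj a b ∧ H.Adj b c ∧ a ≠ c

/-- The two edges of a path of length 2 given by vertices `a`, `b`, `c`. -/
def path2Edges (a b c : V) : Set (Sym2 V) :=
  {s(a, b), s(b, c)}

/-- The edge-induced subgraph `H[E']`: its edges are the edges of `H` belonging to `E'` and its
vertices are the endpoints of those edges. -/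
def edgeInduced (H : SimpleGraph V) (E' : Set (Sym2 V)) : H.Subgraph where
  verts := {v | ∃ e ∈ E' ∩ H.edgeSet, v ∈ e}
  Adj v w := s(v, w) ∈ E' ∧ H.Adj v w
  adj_sub h := h.2
  edge_vert h := ⟨s(_, _), ⟨h.1, (SimpleGraph.mem_edgeSet H).mpr h.2⟩, by simp⟩
  symm := by
    constructor
    intro v w h
    refine ⟨?_, h.2.symm⟩
    rw [Sym2.eq_swap]
    exact h.1

/-- A vertex of degree one. -/
def IsLeaf (F : SimpleGraph V) (u : V) : Prop := ∃! w, F.Adj u w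


private lemma zmod_cast_ne_zero {n m : ℕ} (h0 : 0 < m) (hmn : m < n) : (m : ZMod n) ≠ 0 := by
  haveI : NeZero n := ⟨by omega⟩
  intro h
  rw [ZMod.natCast_eq_zero_iff] at h
  exact absurd (Nat.le_of_dvd h0 h) (by omega)

private lemma core (H : SimpleGraph V) (M : (H.lineGraph).Subgraph)
    (hM : IsUniquelyRestricted M) {n : ℕ} (hn : 3 ≤ n)
    (w : ZMod n → V) (hw : Function.Injective w)
    (adj : ∀ i : ZMod n, H.Adj (w i) (w (i + 1)))
    (mem : ∀ i : ZMod n, s(w i, w (i + 1)) ∈ Subtype.val '' M.verts) : False := by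
  haveI : NeZero n := ⟨by omega⟩
  have h1 : (1 : ZMod n) ≠ 0 := by
    have := zmod_cast_ne_zero (n := n) (m := 1) one_pos (by omega); simpa using this
  have h2 : (2 : ZMod n) ≠ 0 := by
    have := zmod_cast_ne_zero (n := n) (m := 2) two_pos (by omega); simpa using this
  set e : ZMod n → H.edgeSet := fun i => ⟨s(w i, w (i + 1)), adj i⟩ with he
  have hmem : ∀ i, e i ∈ M.verts := by
    intro i
    obtain ⟨ε, hε, hv⟩ := mem i
    have hee : ε = e i := Subtype.ext hv
    rwa [hee] at hε
  have hm := hM.1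
  have hpart : ∀ i, ∃ y, M.Adj (e i) y ∧ ∀ z, M.Adj (e i) z → z = y := fun i => hm (hmem i)
  choose g hG hGu using hpart
  have hMuniq : ∀ x y z : H.edgeSet, M.Adj x y → M.Adj x z → y = z := by
    intro x y z hy hz
    obtain ⟨t, _, ht⟩ := hm (M.edge_vert hy)
    rw [ht y hy, ht z hz]
  have hGsymm : ∀ i x, M.Adj (g i) x → x = e i := fun i x hx =>
    hMuniq (g i) x (e i) hx ((hG i).symm)
  have eval : ∀ i, (e i : Sym2 V) = s(w i, w (i + 1)) := fun _ => rfl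
  have einj : ∀ i j : ZMod n, e i = e j → i = j := by
    intro i j h
    have h' : s(w i, w (i + 1)) = s(w j, w (j + 1)) := congrArg Subtype.val h
    rw [Sym2.eq_iff] at h'
    rcases h' with ⟨h1', _⟩ | ⟨h1', h2'⟩
    · exact hw h1'
    · have e1 : i = j + 1 := hw h1'
      have e2 : i + 1 = j := hw h2'
      exact absurd (by linear_combination e2 - e1 : (2 : ZMod n) = 0) h2
  have ginj : ∀ i j, g i = g j → i = j := by
    intro i j hgij
    have : e j = e i := hGsymm i (e j) (by rw [hgij]; exact (hG j).symm)
    exact (einj j i this).symm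
  have hwmem : ∀ (x j : ZMod n), w x ∈ (e j : Sym2 V) → x = j ∨ x = j + 1 := by
    intro x j hx
    rw [eval, Sym2.mem_iff] at hx
    rcases hx with h | h
    · exact Or.inl (hw h)
    · exact Or.inr (hw h)
  have hbex : ∀ i, ∃ x, x ∈ (e i : Sym2 V) ∧ x ∈ (g i : Sym2 V) ∧ e i ≠ g i := by
    intro i
    have h := M.adj_sub (hG i)
    rw [lineGraph_adj_iff_exists] at h
    obtain ⟨hne, x, hx1, hx2⟩ := h
    exact ⟨x, hx1, hx2, hne⟩
  choose b hb1 hb2 hne using hbex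
  have hbcases : ∀ i, b i = w i ∨ b i = w (i + 1) := by
    intro i
    have := hb1 i; rw [eval, Sym2.mem_iff] at this; exact this
  set D : ZMod n → Prop := fun i => b i = w (i + 1) with hD
  have hDn : ∀ i, ¬ D i → b i = w i := fun i h => (hbcases i).resolve_right h
  have hF1R : ∀ i j, D i → g i = e j → j = i + 1 := by
    intro i j hDi hgij
    have hx : w (i + 1) ∈ (e j : Sym2 V) := by rw [← hgij, ← hDi]; exact hb2 i
    rcases hwmem _ _ hx with h | h
    · exact h.symm
    · exact absurd (congrArg e (add_right_cancel h : i = j)) (fun hh => hne i (hh ▸ hgij).symm)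
  have hF1L : ∀ i j, ¬ D i → g i = e j → j = i - 1 := by
    intro i j hDi hgij
    have hx : w i ∈ (e j : Sym2 V) := by rw [← hgij, ← hDn i hDi]; exact hb2 i
    rcases hwmem _ _ hx with h | h
    · exact absurd (congrArg e h.symm) (fun hh => hne i (hh ▸ hgij).symm)
    · linear_combination -h
  have hInt : ∀ i, g i = e (i + 1) → D i ∧ ¬ D (i + 1) ∧ g (i + 1) = e i := by
    intro i hgi
    have hDi : D i := by
      by_contra hDi
      have hh := hF1L i (i + 1) hDi hgi
      exact h2 (by linear_combination hh)
    have hgi1 : g (i + 1) = e i := (hGu (i + 1) (e i) (by rw [← hgi]; exact (hG i).symm)).symm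
    have hD1 : ¬ D (i + 1) := by
      intro hD1
      have hh := hF1R (i + 1) i hD1 hgi1
      exact h2 (by linear_combination - hh)
    exact ⟨hDi, hD1, hgi1⟩
  have hNeLR : ∀ i, e i ≠ e (i + 1) := by
    intro i h
    exact h1 (by linear_combination - (einj _ _ h))
  by_cases hA : ∃ i, D i ∧ ¬ D (i + 1) ∧ g i ≠ e (i + 1)
  · obtain ⟨i, hDi, hDi1, hgne⟩ := hA
    have hva1 : w (i + 1) ∈ (e i : Sym2 V) := by rw [eval]; exact Sym2.mem_mk_right _ _
    have hva2 : w (i + 1) ∈ (e (i + 1) : Sym2 V) := by rw [eval]; exact Sym2.mem_mk_left _ _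
    have hvc1 : w (i + 1) ∈ (g i : Sym2 V) := by rw [← hDi]; exact hb2 i
    have hvc2 : w (i + 1) ∈ (g (i + 1) : Sym2 V) := by rw [← hDn (i + 1) hDi1]; exact hb2 (i + 1)
    have hc2a1 : g (i + 1) ≠ e i := by
      intro h
      have hadj2 : M.Adj (e i) (e (i + 1)) := by rw [← h]; exact (hG (i + 1)).symm
      exact hgne (hGu i _ hadj2).symm
    have hc1c2 : g i ≠ g (i + 1) := by
      intro h
      have : e (i + 1) = e i := hGsymm i _ (by rw [h]; exact (hG (i + 1)).symm)
      exact hNeLR i this.symm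
    set S : Set H.edgeSet := {e i, e (i + 1), g i, g (i + 1)} with hS
    have hSa1 : e i ∈ S := by simp [hS]
    have hSa2 : e (i + 1) ∈ S := by simp [hS]
    have hSc1 : g i ∈ S := by simp [hS]
    have hSc2 : g (i + 1) ∈ S := by simp [hS]
    have hlg : ∀ x y : H.edgeSet, x ≠ y → w (i + 1) ∈ (x : Sym2 V) → w (i + 1) ∈ (y : Sym2 V) →
        (H.lineGraph).Adj x y :=
      fun x y hxy hx hy => lineGraph_adj_iff_exists.mpr ⟨hxy, _, hx, hy⟩
    set M₂ : (H.lineGraph).Subgraph :=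
      { verts := M.verts
        Adj := fun x y => ((x = e i ∧ y = e (i + 1)) ∨ (x = e (i + 1) ∧ y = e i) ∨
            (x = g i ∧ y = g (i + 1)) ∨ (x = g (i + 1) ∧ y = g i)) ∨
            (M.Adj x y ∧ x ∉ S ∧ y ∉ S)
        adj_sub := by
          rintro x y ((⟨rfl, rfl⟩ | ⟨rfl, rfl⟩ | ⟨rfl, rfl⟩ | ⟨rfl, rfl⟩) | h)
          · exact hlg _ _ (hNeLR i) hva1 hva2
          · exact hlg _ _ (hNeLR i).symm hva2 hva1
          · exact hlg _ _ hc1c2 hvc1 hvc2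
          · exact hlg _ _ hc1c2.symm hvc2 hvc1
          · exact M.adj_sub h.1
        edge_vert := by
          rintro x y ((⟨rfl, _⟩ | ⟨rfl, _⟩ | ⟨rfl, _⟩ | ⟨rfl, _⟩) | h)
          · exact hmem i
          · exact hmem (i + 1)
          · exact M.edge_vert (hG i).symm
          · exact M.edge_vert (hG (i + 1)).symm
          · exact M.edge_vert h.1
        symm := by
          constructor
          rintro x y ((⟨rfl, rfl⟩ | ⟨rfl, rfl⟩ | ⟨rfl, rfl⟩ | ⟨rfl, rfl⟩) | h)
          · exact Or.inl (Or.inr (Or.inl ⟨rfl, rfl⟩))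
          · exact Or.inl (Or.inl ⟨rfl, rfl⟩)
          · exact Or.inl (Or.inr (Or.inr (Or.inr ⟨rfl, rfl⟩)))
          · exact Or.inl (Or.inr (Or.inr (Or.inl ⟨rfl, rfl⟩)))
          · exact Or.inr ⟨h.1.symm, h.2.2, h.2.1⟩ } with hM₂
    have hmatch : M₂.IsMatching := by
      intro x hx
      by_cases hxS : x ∈ S
      · rcases hxS with rfl | rfl | rfl | rfl
        · refine ⟨e (i + 1), Or.inl (Or.inl ⟨rfl, rfl⟩), ?_⟩
          rintro y ((⟨_, rfl⟩ | ⟨hc, _⟩ | ⟨hc, _⟩ | ⟨hc, _⟩) | hc)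
          · rfl
          · exact absurd hc (hNeLR i)
          · exact absurd hc (fun hh => hne i hh)
          · exact absurd hc.symm hc2a1
          · exact absurd hSa1 hc.2.1
        · refine ⟨e i, Or.inl (Or.inr (Or.inl ⟨rfl, rfl⟩)), ?_⟩
          rintro y ((⟨hc, _⟩ | ⟨_, rfl⟩ | ⟨hc, _⟩ | ⟨hc, _⟩) | hc)
          · exact absurd hc.symm (hNeLR i)
          · rfl
          · exact absurd hc.symm hgne
          · exact absurd hc (fun hh => hne (i + 1) hh)
          · exact absurd hSa2 hc.2.1
        · refine ⟨g (i + 1), Or.inl (Or.inr (Or.inr (Or.inl ⟨rfl, rfl⟩))), ?_⟩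
          rintro y ((⟨hc, _⟩ | ⟨hc, _⟩ | ⟨_, rfl⟩ | ⟨hc, _⟩) | hc)
          · exact absurd hc (fun hh => hne i hh.symm)
          · exact absurd hc hgne
          · rfl
          · exact absurd hc hc1c2
          · exact absurd hSc1 hc.2.1
        · refine ⟨g i, Or.inl (Or.inr (Or.inr (Or.inr ⟨rfl, rfl⟩))), ?_⟩
          rintro y ((⟨hc, _⟩ | ⟨hc, _⟩ | ⟨hc, _⟩ | ⟨_, rfl⟩) | hc)
          · exact absurd hc hc2a1
          · exact absurd hc (fun hh => hne (i + 1) hh.symm)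
          · exact absurd hc hc1c2.symm
          · rfl
          · exact absurd hSc2 hc.2.1
      · obtain ⟨y, hy, hyu⟩ := hm hx
        have hyS : y ∉ S := by
          rintro (rfl | rfl | rfl | rfl)
          · exact hxS (by rw [hGu i x hy.symm]; exact hSc1)
          · exact hxS (by rw [hGu (i + 1) x hy.symm]; exact hSc2)
          · exact hxS (by rw [hGsymm i x hy.symm]; exact hSa1)
          · exact hxS (by rw [hGsymm (i + 1) x hy.symm]; exact hSa2)
        refine ⟨y, Or.inr ⟨hy, hxS, hyS⟩, ?_⟩
        rintro z ((⟨rfl, _⟩ | ⟨rfl, _⟩ | ⟨rfl, _⟩ | ⟨rfl, _⟩) | hz)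
        · exact absurd hSa1 hxS
        · exact absurd hSa2 hxS
        · exact absurd hSc1 hxS
        · exact absurd hSc2 hxS
        · exact hyu z hz.1
    have heq := hM.2 M₂ rfl hmatch
    have hadj12 : M.Adj (e i) (e (i + 1)) := by
      rw [← heq]
      exact Or.inl (Or.inl ⟨rfl, rfl⟩)
    exact hgne (hGu i _ hadj12).symm
  · push_neg at hA
    have hNeRR : ∀ j, D (j + 1) → g j ≠ e (j + 1) := fun j hDj1 h => (hInt j h).2.1 hDj1
    have hNeLL : ∀ j, ¬ D j → e j ≠ g (j + 1) := by
      intro j hDj hEq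
      have hadjj : M.Adj (e j) (e (j + 1)) := by rw [hEq]; exact (hG (j + 1)).symm
      exact hDj (hInt j (hGu j _ hadjj).symm).1
    have hRprop : ∀ i, D i → (∀ j, g i ≠ e j) → D (i + 1) := by
      intro i hDi hext
      by_contra hD1
      exact hext (i + 1) (hA i hDi hD1)
    have hLprop : ∀ i, ¬ D i → (∀ j, g i ≠ e j) → ¬ D (i - 1) := by
      intro i hDi hext hD1
      have hni : ¬ D (i - 1 + 1) := by rw [show i - 1 + 1 = i from by ring]; exact hDi
      have hgi1 : g (i - 1) = e (i - 1 + 1) := hA (i - 1) hD1 hni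
      have := (hInt (i - 1) hgi1).2.2
      rw [show i - 1 + 1 = i from by ring] at this
      exact hext (i - 1) this
    set X : Set H.edgeSet := {x | ∃ i, x = e i ∨ x = g i} with hX
    have hXe : ∀ i, e i ∈ X := fun i => ⟨i, Or.inl rfl⟩
    have hXg : ∀ i, g i ∈ X := fun i => ⟨i, Or.inr rfl⟩
    set N : H.edgeSet → H.edgeSet → Prop := fun x y => ∃ i,
      (D i ∧ D (i + 1) ∧ ((x = g i ∧ y = e (i + 1)) ∨ (x = e (i + 1) ∧ y = g i))) ∨
      (¬D i ∧ ¬D (i + 1) ∧ ((x = e i ∧ y = g (i + 1)) ∨ (x = g (i + 1) ∧ y = e i))) ∨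
      (¬D i ∧ D (i + 1) ∧ ((x = e i ∧ y = e (i + 1)) ∨ (x = e (i + 1) ∧ y = e i))) with hN
    have hlg : ∀ (v : V) (x y : H.edgeSet), x ≠ y → v ∈ (x : Sym2 V) → v ∈ (y : Sym2 V) →
        (H.lineGraph).Adj x y :=
      fun v x y hxy hx hy => lineGraph_adj_iff_exists.mpr ⟨hxy, v, hx, hy⟩
    have hmemR : ∀ j, w (j + 1) ∈ (e j : Sym2 V) := by
      intro j; rw [eval]; exact Sym2.mem_mk_right _ _
    have hmemL : ∀ j, w j ∈ (e j : Sym2 V) := by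
      intro j; rw [eval]; exact Sym2.mem_mk_left _ _
    have hgmemR : ∀ j, D j → w (j + 1) ∈ (g j : Sym2 V) := by
      intro j hDj; rw [← hDj]; exact hb2 j
    have hgmemL : ∀ j, ¬ D j → w j ∈ (g j : Sym2 V) := by
      intro j hDj; rw [← hDn j hDj]; exact hb2 j
    have hNadj : ∀ x y, N x y → (H.lineGraph).Adj x y := by
      rintro x y ⟨j, ⟨hDj, hDj1, (⟨rfl, rfl⟩ | ⟨rfl, rfl⟩)⟩ |
        ⟨hDj, hDj1, (⟨rfl, rfl⟩ | ⟨rfl, rfl⟩)⟩ | ⟨hDj, hDj1, (⟨rfl, rfl⟩ | ⟨rfl, rfl⟩)⟩⟩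
      · exact hlg (w (j + 1)) _ _ (hNeRR j hDj1) (hgmemR j hDj) (hmemL (j + 1))
      · exact (hlg (w (j + 1)) _ _ (hNeRR j hDj1) (hgmemR j hDj) (hmemL (j + 1))).symm
      · exact hlg (w (j + 1)) _ _ (hNeLL j hDj) (hmemR j) (hgmemL (j + 1) hDj1)
      · exact (hlg (w (j + 1)) _ _ (hNeLL j hDj) (hmemR j) (hgmemL (j + 1) hDj1)).symm
      · exact hlg (w (j + 1)) _ _ (hNeLR j) (hmemR j) (hmemL (j + 1))
      · exact (hlg (w (j + 1)) _ _ (hNeLR j) (hmemR j) (hmemL (j + 1))).symm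
    have hNX : ∀ x y, N x y → x ∈ X := by
      rintro x y ⟨j, ⟨_, _, (⟨rfl, _⟩ | ⟨rfl, _⟩)⟩ |
        ⟨_, _, (⟨rfl, _⟩ | ⟨rfl, _⟩)⟩ | ⟨_, _, (⟨rfl, _⟩ | ⟨rfl, _⟩)⟩⟩
      exacts [hXg j, hXe (j + 1), hXe j, hXg (j + 1), hXe j, hXe (j + 1)]
    have hNvert : ∀ x y, N x y → x ∈ M.verts := by
      rintro x y ⟨j, ⟨_, _, (⟨rfl, _⟩ | ⟨rfl, _⟩)⟩ |
        ⟨_, _, (⟨rfl, _⟩ | ⟨rfl, _⟩)⟩ | ⟨_, _, (⟨rfl, _⟩ | ⟨rfl, _⟩)⟩⟩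
      exacts [M.edge_vert (hG j).symm, hmem (j + 1), hmem j,
        M.edge_vert (hG (j + 1)).symm, hmem j, hmem (j + 1)]
    have hNsymm : ∀ x y, N x y → N y x := by
      rintro x y ⟨j, ⟨h1', h2', (⟨rfl, rfl⟩ | ⟨rfl, rfl⟩)⟩ |
        ⟨h1', h2', (⟨rfl, rfl⟩ | ⟨rfl, rfl⟩)⟩ | ⟨h1', h2', (⟨rfl, rfl⟩ | ⟨rfl, rfl⟩)⟩⟩
      · exact ⟨j, Or.inl ⟨h1', h2', Or.inr ⟨rfl, rfl⟩⟩⟩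
      · exact ⟨j, Or.inl ⟨h1', h2', Or.inl ⟨rfl, rfl⟩⟩⟩
      · exact ⟨j, Or.inr (Or.inl ⟨h1', h2', Or.inr ⟨rfl, rfl⟩⟩)⟩
      · exact ⟨j, Or.inr (Or.inl ⟨h1', h2', Or.inl ⟨rfl, rfl⟩⟩)⟩
      · exact ⟨j, Or.inr (Or.inr ⟨h1', h2', Or.inr ⟨rfl, rfl⟩⟩)⟩
      · exact ⟨j, Or.inr (Or.inr ⟨h1', h2', Or.inl ⟨rfl, rfl⟩⟩)⟩
    set M' : (H.lineGraph).Subgraph :=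
      { verts := M.verts
        Adj := fun x y => N x y ∨ (M.Adj x y ∧ x ∉ X ∧ y ∉ X)
        adj_sub := by
          rintro x y (h | h)
          · exact hNadj _ _ h
          · exact M.adj_sub h.1
        edge_vert := by
          rintro x y (h | h)
          · exact hNvert _ _ h
          · exact M.edge_vert h.1
        symm := by
          constructor
          rintro x y (h | h)
          · exact Or.inl (hNsymm _ _ h)
          · exact Or.inr ⟨h.1.symm, h.2.2, h.2.1⟩ } with hM'
    have master_e : ∀ i y, N (e i) y →
        (D i ∧ D (i - 1) ∧ y = g (i - 1)) ∨ (D i ∧ ¬D (i - 1) ∧ y = e (i - 1)) ∨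
        (¬D i ∧ ¬D (i + 1) ∧ y = g (i + 1)) ∨ (¬D i ∧ D (i + 1) ∧ y = e (i + 1)) := by
      rintro i y ⟨j, ⟨hDj, hDj1, (⟨hx, rfl⟩ | ⟨hx, rfl⟩)⟩ |
        ⟨hDj, hDj1, (⟨hx, rfl⟩ | ⟨hx, rfl⟩)⟩ | ⟨hDj, hDj1, (⟨hx, rfl⟩ | ⟨hx, rfl⟩)⟩⟩
      · exfalso
        have hji : i = j + 1 := hF1R j i hDj hx.symm
        have hgj : g j = e (j + 1) := by rw [← hji]; exact hx.symm
        exact hNeRR j hDj1 hgj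
      · have hji : i = j + 1 := einj _ _ hx
        have hji' : i - 1 = j := by linear_combination hji
        refine Or.inl ⟨by rw [hji]; exact hDj1, by rw [hji']; exact hDj, by rw [hji']⟩
      · have hji : i = j := einj _ _ hx
        subst hji
        exact Or.inr (Or.inr (Or.inl ⟨hDj, hDj1, rfl⟩))
      · exfalso
        have hji : i = (j + 1) - 1 := hF1L (j + 1) i hDj1 hx.symm
        have hij : i = j := by linear_combination hji
        subst hij
        exact hNeLL i hDj hx
      · have hji : i = j := einj _ _ hx
        subst hji
        exact Or.inr (Or.inr (Or.inr ⟨hDj, hDj1, rfl⟩))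
      · have hji : i = j + 1 := einj _ _ hx
        have hji' : i - 1 = j := by linear_combination hji
        refine Or.inr (Or.inl ⟨by rw [hji]; exact hDj1, by rw [hji']; exact hDj, by rw [hji']⟩)
    have master_g : ∀ i y, (∀ j, g i ≠ e j) → N (g i) y →
        (D i ∧ D (i + 1) ∧ y = e (i + 1)) ∨ (¬D (i - 1) ∧ ¬D i ∧ y = e (i - 1)) := by
      rintro i y hext ⟨j, ⟨hDj, hDj1, (⟨hx, rfl⟩ | ⟨hx, rfl⟩)⟩ |
        ⟨hDj, hDj1, (⟨hx, rfl⟩ | ⟨hx, rfl⟩)⟩ | ⟨hDj, hDj1, (⟨hx, rfl⟩ | ⟨hx, rfl⟩)⟩⟩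
      · have hji : i = j := ginj _ _ hx
        subst hji
        exact Or.inl ⟨hDj, hDj1, rfl⟩
      · exact absurd hx (hext (j + 1))
      · exact absurd hx (hext j)
      · have hji : i = j + 1 := ginj _ _ hx
        have hji' : i - 1 = j := by linear_combination hji
        exact Or.inr ⟨by rw [hji']; exact hDj, by rw [hji]; exact hDj1, by rw [hji']⟩
      · exact absurd hx (hext j)
      · exact absurd hx (hext (j + 1))
    have hmatch : M'.IsMatching := by
      intro x hx
      by_cases hxX : x ∈ X
      swap
      · obtain ⟨y, hy, hyu⟩ := hm hx
        have hyX : y ∉ X := by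
          rintro ⟨j, rfl | rfl⟩
          · exact hxX (by rw [hGu j x hy.symm]; exact hXg j)
          · exact hxX (by rw [hGsymm j x hy.symm]; exact hXe j)
        refine ⟨y, Or.inr ⟨hy, hxX, hyX⟩, ?_⟩
        rintro z (hz | hz)
        · exact absurd (hNX _ _ hz) hxX
        · exact hyu z hz.1
      · by_cases hxe : ∃ i, x = e i
        · obtain ⟨i, rfl⟩ := hxe
          by_cases hDi : D i
          · by_cases hDi' : D (i - 1)
            · refine ⟨g (i - 1), Or.inl ⟨i - 1, Or.inl ⟨hDi', ?_, Or.inr ⟨?_, rfl⟩⟩⟩, ?_⟩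
              · rw [show i - 1 + 1 = i from by ring]; exact hDi
              · rw [show i - 1 + 1 = i from by ring]
              · rintro y (hy | hy)
                · rcases master_e i y hy with ⟨_, _, h⟩ | ⟨_, hc, _⟩ | ⟨hc, _, _⟩ | ⟨hc, _, _⟩
                  · exact h
                  · exact absurd hDi' hc
                  · exact absurd hDi hc
                  · exact absurd hDi hc
                · exact absurd (hXe i) hy.2.1
            · refine ⟨e (i - 1), Or.inl ⟨i - 1, Or.inr (Or.inr ⟨hDi', ?_, Or.inr ⟨?_, rfl⟩⟩)⟩, ?_⟩
              · rw [show i - 1 + 1 = i from by ring]; exact hDi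
              · rw [show i - 1 + 1 = i from by ring]
              · rintro y (hy | hy)
                · rcases master_e i y hy with ⟨_, hc, _⟩ | ⟨_, _, h⟩ | ⟨hc, _, _⟩ | ⟨hc, _, _⟩
                  · exact absurd hc hDi'
                  · exact h
                  · exact absurd hDi hc
                  · exact absurd hDi hc
                · exact absurd (hXe i) hy.2.1
          · by_cases hDi' : D (i + 1)
            · refine ⟨e (i + 1), Or.inl ⟨i, Or.inr (Or.inr ⟨hDi, hDi', Or.inl ⟨rfl, rfl⟩⟩)⟩, ?_⟩
              rintro y (hy | hy)
              · rcases master_e i y hy with ⟨hc, _, _⟩ | ⟨hc, _, _⟩ | ⟨_, hc, _⟩ | ⟨_, _, h⟩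
                · exact absurd hc hDi
                · exact absurd hc hDi
                · exact absurd hDi' hc
                · exact h
              · exact absurd (hXe i) hy.2.1
            · refine ⟨g (i + 1), Or.inl ⟨i, Or.inr (Or.inl ⟨hDi, hDi', Or.inl ⟨rfl, rfl⟩⟩)⟩, ?_⟩
              rintro y (hy | hy)
              · rcases master_e i y hy with ⟨hc, _, _⟩ | ⟨hc, _, _⟩ | ⟨_, _, h⟩ | ⟨_, hc, _⟩
                · exact absurd hc hDi
                · exact absurd hc hDi
                · exact h
                · exact absurd hc hDi'
              · exact absurd (hXe i) hy.2.1
        · obtain ⟨i, hxg⟩ : ∃ i, x = g i := by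
            rcases hxX with ⟨i, h | h⟩
            · exact absurd ⟨i, h⟩ hxe
            · exact ⟨i, h⟩
          subst hxg
          have hext : ∀ j, g i ≠ e j := fun j h => hxe ⟨j, h⟩
          by_cases hDi : D i
          · have hDi1 : D (i + 1) := hRprop i hDi hext
            refine ⟨e (i + 1), Or.inl ⟨i, Or.inl ⟨hDi, hDi1, Or.inl ⟨rfl, rfl⟩⟩⟩, ?_⟩
            rintro y (hy | hy)
            · rcases master_g i y hext hy with ⟨_, _, h⟩ | ⟨_, hc, _⟩
              · exact h
              · exact absurd hDi hc
            · exact absurd (hXg i) hy.2.1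
          · have hDi1 : ¬ D (i - 1) := hLprop i hDi hext
            refine ⟨e (i - 1), Or.inl ⟨i - 1, Or.inr (Or.inl ⟨hDi1, ?_, Or.inr ⟨?_, rfl⟩⟩)⟩, ?_⟩
            · rw [show i - 1 + 1 = i from by ring]; exact hDi
            · rw [show i - 1 + 1 = i from by ring]
            · rintro y (hy | hy)
              · rcases master_g i y hext hy with ⟨hc, _, _⟩ | ⟨_, _, h⟩
                · exact absurd hc hDi
                · exact h
              · exact absurd (hXg i) hy.2.1
    have heq := hM.2 M' rfl hmatch
    have hMofN : ∀ x y, N x y → M.Adj x y := by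
      intro x y h
      rw [← heq]
      exact Or.inl h
    by_cases hLR : ∃ i, ¬ D i ∧ D (i + 1)
    · obtain ⟨i, h0, h1'⟩ := hLR
      have hadj' : M.Adj (e i) (e (i + 1)) :=
        hMofN _ _ ⟨i, Or.inr (Or.inr ⟨h0, h1', Or.inl ⟨rfl, rfl⟩⟩)⟩
      exact h0 (hInt i (hGu i _ hadj').symm).1
    · push_neg at hLR
      by_cases hD0 : D 0
      · have hallD : ∀ i, D i := by
          intro i
          by_contra hni
          have hstep : ∀ m : ℕ, ¬ D (i + (m : ZMod n)) := by
            intro m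
            induction m with
            | zero => simpa using hni
            | succ k ih =>
                have hh := hLR _ ih
                have : i + ((k + 1 : ℕ) : ZMod n) = i + (k : ZMod n) + 1 := by push_cast; ring
                rwa [this]
          have hc := hstep (-i : ZMod n).val
          rw [ZMod.natCast_rightInverse (-i)] at hc
          simp at hc
          exact hc hD0
        have hadj' : M.Adj (g 0) (e (0 + 1)) :=
          hMofN _ _ ⟨0, Or.inl ⟨hallD 0, hallD (0 + 1), Or.inl ⟨rfl, rfl⟩⟩⟩
        have := hGsymm 0 _ hadj'
        exact h1 (by linear_combination (einj _ _ this))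
      · have hallnD : ∀ i, ¬ D i := by
          intro i
          have hstep : ∀ m : ℕ, ¬ D ((m : ℕ) : ZMod n) := by
            intro m
            induction m with
            | zero => simpa using hD0
            | succ k ih =>
                have hh := hLR _ ih
                have : ((k + 1 : ℕ) : ZMod n) = ((k : ℕ) : ZMod n) + 1 := by push_cast; ring
                rwa [← this] at hh
          have hc := hstep i.val
          rwa [ZMod.natCast_rightInverse i] at hc
        have hadj' : M.Adj (e 0) (g (0 + 1)) :=
          hMofN _ _ ⟨0, Or.inr (Or.inl ⟨hallnD 0, hallnD (0 + 1), Or.inl ⟨rfl, rfl⟩⟩)⟩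
        have := hGu 0 _ hadj'
        exact h1 (by linear_combination -(ginj _ _ this.symm))

private lemma support_get?' {G : SimpleGraph V} {u v : V} (p : G.Walk u v) :
    ∀ (i : ℕ), i ≤ p.length → p.support[i]? = some (p.getVert i) := by
  induction p with
  | nil => intro i hi; simp at hi; subst hi; rfl
  | cons h q ih =>
      intro i hi
      cases i with
      | zero => rfl
      | succ i =>
          have := ih i (by simpa [SimpleGraph.Walk.length_cons] using hi)
          simpa [SimpleGraph.Walk.support_cons, SimpleGraph.Walk.getVert_cons_succ] using this

private lemma cycle_getVert_inj {G : SimpleGraph V} {u : V} (p : G.Walk u u) (hp : p.IsCycle)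
    {m m' : ℕ} (hm : m < p.length) (hm' : m' < p.length)
    (h : p.getVert (m + 1) = p.getVert (m' + 1)) : m = m' := by
  have hlen : p.support.tail.length = p.length := by
    have := p.length_support
    simp [List.length_tail, this]
  have key : ∀ k : ℕ, k < p.length → p.support.tail[k]? = some (p.getVert (k + 1)) := by
    intro k hk
    have h1 := support_get?' p (k + 1) (by omega)
    rw [SimpleGraph.Walk.support_eq_cons] at h1
    simpa using h1
  have h1 := key m hm
  have h2 := key m' hm'
  rw [h] at h1
  exact (List.getElem?_inj (i := m) (by omega) hp.support_nodup).mp (h1.trans h2.symm)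

/-- if `M` is a uniquely restricted matching of the line graph `L(H)`, then the
edge-induced subgraph of `H` on the edges corresponding to the `M`-saturated vertices of
`L(H)` is a forest. -/
theorem urm_line_graph_forest (H : SimpleGraph V) (M : (H.lineGraph).Subgraph)
    (hM : IsUniquelyRestricted M) :
    ((edgeInduced H (Subtype.val '' M.verts)).coe).IsAcyclic := by
  intro u p hp
  have hn : 3 ≤ p.length := hp.three_le_length
  haveI : NeZero p.length := ⟨by omega⟩
  set n := p.length with hn'
  haveI : Fact (1 < n) := ⟨by omega⟩
  set f : ZMod n → _ := fun i => p.getVert (i.val + 1) with hf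
  have hinj : Function.Injective f := by
    intro i j hij
    apply ZMod.val_injective n
    exact cycle_getVert_inj p hp i.val_lt j.val_lt hij
  have hval : ∀ i : ZMod n, (i + 1).val = (i.val + 1) % n := by
    intro i; rw [ZMod.val_add, ZMod.val_one]
  have hadjf : ∀ i : ZMod n,
      ((edgeInduced H (Subtype.val '' M.verts)).coe).Adj (f i) (f (i + 1)) := by
    intro i
    have hiv : i.val < n := i.val_lt
    by_cases hlt : i.val + 1 < n
    · have h1 : (i + 1).val = i.val + 1 := by rw [hval i, Nat.mod_eq_of_lt hlt]
      show ((edgeInduced H (Subtype.val '' M.verts)).coe).Adj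
        (p.getVert (i.val + 1)) (p.getVert ((i + 1).val + 1))
      rw [h1]
      exact p.adj_getVert_succ (by omega)
    · have hieq : i.val + 1 = n := by omega
      have h1 : (i + 1).val = 0 := by rw [hval i, hieq, Nat.mod_self]
      show ((edgeInduced H (Subtype.val '' M.verts)).coe).Adj
        (p.getVert (i.val + 1)) (p.getVert ((i + 1).val + 1))
      rw [h1, hieq]
      have h2 : p.getVert n = p.getVert 0 := by
        rw [SimpleGraph.Walk.getVert_zero]
        exact p.getVert_length
      rw [h2]
      exact p.adj_getVert_succ (by omega)
  have hadj' : ∀ i : ZMod n,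
      (edgeInduced H (Subtype.val '' M.verts)).Adj ((f i : _) : V) ((f (i + 1) : _) : V) := by
    intro i
    have h := hadjf i
    rwa [SimpleGraph.Subgraph.coe_adj] at h
  exact core H M hM hn (fun i => ((f i : _) : V))
    (fun i j hij => hinj (Subtype.ext hij))
    (fun i => (hadj' i).2) (fun i => (hadj' i).1)

end URM
end

section
/- Let H be a simple graph and let M be a matching in the line graph L(H). Each edge of M joins two adjacent edges of H and hence corresponds to a path of length 2 in H. If two distinct edges of M correspond to paths of length 2 in H having the same middle vertex, then M is not a uniquely restricted matching of L(H). -/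
namespace URM

open SimpleGraph

variable {V : Type*}

/-- if two distinct edges of a matching `M` in `L(H)` correspond to paths of
length 2 in `H` having the same middle vertex `v`, then `M` is not uniquely restricted. -/
theorem not_urm_of_same_middle_vertex (H : SimpleGraph V) (M : (H.lineGraph).Subgraph)
    (hM : M.IsMatching) (e₁ f₁ e₂ f₂ : H.edgeSet)
    (h₁ : M.Adj e₁ f₁) (h₂ : M.Adj e₂ f₂)
    (hne : s(e₁, f₁) ≠ s(e₂, f₂)) (v : V)
    (hv₁ : v ∈ (e₁ : Sym2 V)) (hv₂ : v ∈ (f₁ : Sym2 V))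
    (hv₃ : v ∈ (e₂ : Sym2 V)) (hv₄ : v ∈ (f₂ : Sym2 V)) :
    ¬ IsUniquelyRestricted M := by
  rintro ⟨-, hU⟩
  have key : ∀ (x y z : H.edgeSet), M.Adj x y → M.Adj x z → y = z := by
    intro x y z hy hz
    exact (hM (M.edge_vert hy)).unique hy hz
  have hef1 : e₁ ≠ f₁ := h₁.ne
  have hef2 : e₂ ≠ f₂ := h₂.ne
  have he12 : e₁ ≠ e₂ := by
    intro h; subst h
    exact hne (by rw [key e₁ f₁ f₂ h₁ h₂])
  have he1f2 : e₁ ≠ f₂ := by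
    intro h; subst h
    have : f₁ = e₂ := key _ _ _ h₁ h₂.symm
    subst this
    exact hne (Sym2.eq_swap)
  have hf1e2 : f₁ ≠ e₂ := by
    intro h; subst h
    have : e₁ = f₂ := key _ _ _ h₁.symm h₂
    subst this
    exact hne (Sym2.eq_swap)
  have hf12 : f₁ ≠ f₂ := by
    intro h; subst h
    have : e₁ = e₂ := key _ _ _ h₁.symm h₂.symm
    subst this
    exact hne rfl
  have adjE : H.lineGraph.Adj e₁ e₂ := lineGraph_adj_iff_exists.mpr ⟨he12, v, hv₁, hv₃⟩
  have adjF : H.lineGraph.Adj f₁ f₂ := lineGraph_adj_iff_exists.mpr ⟨hf12, v, hv₂, hv₄⟩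
  set A : H.edgeSet → H.edgeSet → Prop := fun x y =>
    (M.Adj x y ∧ s(x, y) ≠ s(e₁, f₁) ∧ s(x, y) ≠ s(e₂, f₂)) ∨
      s(x, y) = s(e₁, e₂) ∨ s(x, y) = s(f₁, f₂) with hA
  have hAsub : ∀ x y, A x y → H.lineGraph.Adj x y := by
    intro x y h
    rcases h with ⟨h, -⟩ | h | h
    · exact M.adj_sub h
    · rcases Sym2.eq_iff.mp h with ⟨rfl, rfl⟩ | ⟨rfl, rfl⟩
      · exact adjE
      · exact adjE.symm
    · rcases Sym2.eq_iff.mp h with ⟨rfl, rfl⟩ | ⟨rfl, rfl⟩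
      · exact adjF
      · exact adjF.symm
  have hAvert : ∀ x y, A x y → x ∈ M.verts := by
    intro x y h
    rcases h with ⟨h, -⟩ | h | h
    · exact M.edge_vert h
    · rcases Sym2.eq_iff.mp h with ⟨rfl, -⟩ | ⟨rfl, -⟩
      · exact M.edge_vert h₁
      · exact M.edge_vert h₂
    · rcases Sym2.eq_iff.mp h with ⟨rfl, -⟩ | ⟨rfl, -⟩
      · exact M.edge_vert h₁.symm
      · exact M.edge_vert h₂.symm
  have hAsymm : ∀ x y, A x y → A y x := by
    intro x y h
    rcases h with ⟨h, h1, h2⟩ | h | h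
    · exact Or.inl ⟨h.symm, by rwa [Sym2.eq_swap], by rwa [Sym2.eq_swap]⟩
    · exact Or.inr (Or.inl (by rwa [Sym2.eq_swap]))
    · exact Or.inr (Or.inr (by rwa [Sym2.eq_swap]))
  set M' : (H.lineGraph).Subgraph :=
    { verts := M.verts
      Adj := A
      adj_sub := fun {x y} h => hAsub x y h
      edge_vert := fun {x y} h => hAvert x y h
      symm := ⟨fun x y h => hAsymm x y h⟩ } with hM'
  have hM'match : M'.IsMatching := by
    intro x hx
    by_cases hxe1 : x = e₁
    · subst hxe1
      refine ⟨e₂, Or.inr (Or.inl rfl), ?_⟩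
      intro y hy
      rcases hy with ⟨h, h1, -⟩ | h | h
      · exact absurd (by rw [key _ _ _ h h₁]) h1
      · rcases Sym2.eq_iff.mp h with ⟨-, rfl⟩ | ⟨h', -⟩
        · rfl
        · exact absurd h' he12
      · rcases Sym2.eq_iff.mp h with ⟨h', -⟩ | ⟨h', -⟩
        · exact absurd h' hef1
        · exact absurd h' he1f2
    by_cases hxe2 : x = e₂
    · subst hxe2
      refine ⟨e₁, Or.inr (Or.inl Sym2.eq_swap), ?_⟩
      intro y hy
      rcases hy with ⟨h, -, h2⟩ | h | h
      · exact absurd (by rw [key _ _ _ h h₂]) h2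
      · rcases Sym2.eq_iff.mp h with ⟨h', -⟩ | ⟨-, rfl⟩
        · exact absurd h' he12.symm
        · rfl
      · rcases Sym2.eq_iff.mp h with ⟨h', -⟩ | ⟨h', -⟩
        · exact absurd h' hf1e2.symm
        · exact absurd h' hef2
    by_cases hxf1 : x = f₁
    · subst hxf1
      refine ⟨f₂, Or.inr (Or.inr rfl), ?_⟩
      intro y hy
      rcases hy with ⟨h, h1, -⟩ | h | h
      · have : y = e₁ := key _ _ _ h h₁.symm
        subst this
        exact absurd Sym2.eq_swap h1
      · rcases Sym2.eq_iff.mp h with ⟨h', -⟩ | ⟨h', -⟩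
        · exact absurd h' hef1.symm
        · exact absurd h' hf1e2
      · rcases Sym2.eq_iff.mp h with ⟨-, rfl⟩ | ⟨h', -⟩
        · rfl
        · exact absurd h' hf12
    by_cases hxf2 : x = f₂
    · subst hxf2
      refine ⟨f₁, Or.inr (Or.inr Sym2.eq_swap), ?_⟩
      intro y hy
      rcases hy with ⟨h, -, h2⟩ | h | h
      · have : y = e₂ := key _ _ _ h h₂.symm
        subst this
        exact absurd Sym2.eq_swap h2
      · rcases Sym2.eq_iff.mp h with ⟨h', -⟩ | ⟨h', -⟩
        · exact absurd h' he1f2.symm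
        · exact absurd h' hef2.symm
      · rcases Sym2.eq_iff.mp h with ⟨h', -⟩ | ⟨-, rfl⟩
        · exact absurd h' hf12.symm
        · rfl
    · obtain ⟨w, hw, hwu⟩ := hM hx
      refine ⟨w, Or.inl ⟨hw, ?_, ?_⟩, ?_⟩
      · intro h
        rcases Sym2.eq_iff.mp h with ⟨h', -⟩ | ⟨h', -⟩
        · exact hxe1 h'
        · exact hxf1 h'
      · intro h
        rcases Sym2.eq_iff.mp h with ⟨h', -⟩ | ⟨h', -⟩
        · exact hxe2 h'
        · exact hxf2 h'
      · intro y hy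
        rcases hy with ⟨h, -, -⟩ | h | h
        · exact hwu y h
        · rcases Sym2.eq_iff.mp h with ⟨h', -⟩ | ⟨h', -⟩
          · exact absurd h' hxe1
          · exact absurd h' hxe2
        · rcases Sym2.eq_iff.mp h with ⟨h', -⟩ | ⟨h', -⟩
          · exact absurd h' hxf1
          · exact absurd h' hxf2
  have hEq : M' = M := hU M' rfl hM'match
  have : M.Adj e₁ e₂ := by
    rw [← hEq]
    exact Or.inr (Or.inl rfl)
  have : e₂ = f₁ := key _ _ _ this h₁
  exact hf1e2 this.symm

end URM
end

section
/- Let F be a forest whose edge set can be partitioned into paths of length 2 whose middle vertices are pairwise distinct (equivalently, no two of the paths together form an edge-induced subgraph isomorphic to K_{1,4}). Then no vertex of F has three or more neighbors of degree 1 in F. -/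
namespace URM

open SimpleGraph

variable {V : Type*}

/-- if the edge set of a forest `F` is partitioned into paths of length 2 whose
middle vertices are pairwise distinct, then no vertex of `F` has three or more neighbors of
degree 1. -/
theorem no_three_leaf_neighbors {ι : Type*} (F : SimpleGraph V) (hF : F.IsAcyclic)
    (a b c : ι → V)
    (hP : ∀ i, IsPath2 F (a i) (b i) (c i))
    (hdisj : ∀ i j, i ≠ j →
      Disjoint (path2Edges (a i) (b i) (c i)) (path2Edges (a j) (b j) (c j)))
    (hmid : ∀ i j, i ≠ j → b i ≠ b j)
    (hE : F.edgeSet = ⋃ i, path2Edges (a i) (b i) (c i)) :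
    ∀ v u₁ u₂ u₃ : V, F.Adj v u₁ → F.Adj v u₂ → F.Adj v u₃ →
      IsLeaf F u₁ → IsLeaf F u₂ → IsLeaf F u₃ →
      u₁ = u₂ ∨ u₁ = u₃ ∨ u₂ = u₃ := by
  intro v u₁ u₂ u₃ h1 h2 h3 l1 l2 l3
  have key : ∀ u, F.Adj v u → IsLeaf F u → ∃ i, v = b i ∧ (u = a i ∨ u = c i) := by
    intro u hadj hl
    have he : s(v, u) ∈ F.edgeSet := hadj
    rw [hE] at he
    obtain ⟨_, ⟨i, rfl⟩, hi⟩ := he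
    have hnb : u ≠ b i := by
      rintro rfl
      obtain ⟨w, hw, huniq⟩ := hl
      obtain ⟨hab, hbc, hac⟩ := hP i
      exact hac ((huniq _ hab.symm).trans (huniq _ hbc).symm)
    rcases hi with h | h
    · rcases Sym2.eq_iff.mp h with ⟨hv, hu⟩ | ⟨hv, hu⟩
      · exact absurd hu hnb
      · exact ⟨i, hv, Or.inl hu⟩
    · rcases Sym2.eq_iff.mp h with ⟨hv, hu⟩ | ⟨hv, hu⟩
      · exact ⟨i, hv, Or.inr hu⟩
      · exact absurd hu hnb
  obtain ⟨i₁, hv1, hu1⟩ := key u₁ h1 l1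
  obtain ⟨i₂, hv2, hu2⟩ := key u₂ h2 l2
  obtain ⟨i₃, hv3, hu3⟩ := key u₃ h3 l3
  have e12 : i₁ = i₂ := by
    by_contra h; exact hmid i₁ i₂ h (hv1 ▸ hv2)
  have e13 : i₁ = i₃ := by
    by_contra h; exact hmid i₁ i₃ h (hv1 ▸ hv3)
  subst e12; subst e13
  rcases hu1 with h1' | h1' <;> rcases hu2 with h2' | h2' <;> rcases hu3 with h3' | h3' <;>
    simp [h1', h2', h3']

end URM
end

section
/- Let X be a finite set with |X| = N ≥ 1, and let Y be a collection of subsets of X such that any two distinct members of Y are incomparable (neither is a subset of the other). Then |Y| ≤ 2^N / √N. -/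
namespace URM

open SimpleGraph

variable {V : Type*}

lemma even_centralBinom_sq (m : ℕ) :
    (2 * m + 1) * (Nat.centralBinom m) ^ 2 ≤ 16 ^ m := by
  induction m with
  | zero => simp [Nat.centralBinom]
  | succ m ih =>
    have key : (m + 1) * Nat.centralBinom (m + 1) = 2 * (2 * m + 1) * Nat.centralBinom m :=
      Nat.succ_mul_centralBinom_succ m
    have h1 : (m + 1) ^ 2 * ((2 * (m + 1) + 1) * (Nat.centralBinom (m + 1)) ^ 2)
        ≤ (m + 1) ^ 2 * 16 ^ (m + 1) := by
      have e1 : (m + 1) ^ 2 * ((2 * (m + 1) + 1) * (Nat.centralBinom (m + 1)) ^ 2)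
          = (2 * m + 3) * ((m + 1) * Nat.centralBinom (m + 1)) ^ 2 := by ring
      rw [e1, key]
      have e2 : (2 * m + 3) * (2 * (2 * m + 1) * Nat.centralBinom m) ^ 2
          = 4 * ((2 * m + 1) * (2 * m + 3)) * ((2 * m + 1) * (Nat.centralBinom m) ^ 2) := by
        ring
      rw [e2]
      have h3 : (2 * m + 1) * (2 * m + 3) ≤ (2 * m + 2) ^ 2 := by nlinarith
      calc 4 * ((2 * m + 1) * (2 * m + 3)) * ((2 * m + 1) * (Nat.centralBinom m) ^ 2)
          ≤ 4 * (2 * m + 2) ^ 2 * 16 ^ m := by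
            exact Nat.mul_le_mul (Nat.mul_le_mul_left 4 h3) ih
        _ = (m + 1) ^ 2 * 16 ^ (m + 1) := by ring
    exact Nat.le_of_mul_le_mul_left h1 (by positivity)

lemma key_nat (N : ℕ) : N * (N.choose (N / 2)) ^ 2 ≤ 4 ^ N := by
  rcases Nat.even_or_odd N with ⟨m, hm⟩ | ⟨m, hm⟩
  · subst hm
    have : (m + m) / 2 = m := by omega
    rw [this]
    have h2 : m + m = 2 * m := by ring
    rw [h2]
    have : (2 * m).choose m = Nat.centralBinom m := rfl
    rw [this]
    calc 2 * m * Nat.centralBinom m ^ 2 ≤ (2 * m + 1) * Nat.centralBinom m ^ 2 :=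
          Nat.mul_le_mul_right _ (by omega)
      _ ≤ 16 ^ m := even_centralBinom_sq m
      _ = 4 ^ (2 * m) := by rw [pow_mul]; norm_num
  · subst hm
    have hdiv : (2 * m + 1) / 2 = m := by omega
    rw [hdiv]
    -- centralBinom (m+1) = 2 * (2m+1).choose m
    have hsymm : (2 * m + 1).choose (m + 1) = (2 * m + 1).choose m :=
      Nat.choose_symm_half m
    have hcb : Nat.centralBinom (m + 1) = 2 * (2 * m + 1).choose m := by
      have : Nat.centralBinom (m + 1) = (2 * (m + 1)).choose (m + 1) := rfl
      rw [this]
      have h2 : 2 * (m + 1) = (2 * m + 1) + 1 := by ring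
      rw [h2, Nat.choose_succ_succ, hsymm]
      omega
    have hkey := even_centralBinom_sq (m + 1)
    rw [hcb] at hkey
    have h4 : (2 * (m + 1) + 1) * (2 * (2 * m + 1).choose m) ^ 2
        = 4 * ((2 * m + 3) * ((2 * m + 1).choose m) ^ 2) := by ring
    rw [h4] at hkey
    have h5 : 16 ^ (m + 1) = 4 * 4 ^ (2 * m + 1) := by
      rw [show (16:ℕ) = 4 ^ 2 by norm_num, ← pow_mul,
        show 2 * (m + 1) = (2 * m + 1) + 1 by ring, pow_succ]
      ring
    rw [h5] at hkey
    have h6 : (2 * m + 3) * ((2 * m + 1).choose m) ^ 2 ≤ 4 ^ (2 * m + 1) :=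
      Nat.le_of_mul_le_mul_left hkey (by norm_num)
    calc (2 * m + 1) * ((2 * m + 1).choose m) ^ 2
        ≤ (2 * m + 3) * ((2 * m + 1).choose m) ^ 2 := Nat.mul_le_mul_right _ (by omega)
      _ ≤ 4 ^ (2 * m + 1) := h6

/-- an antichain of subsets of an `N`-element set (`N ≥ 1`) has at most
`2^N / √N` members. -/
theorem antichain_card_le {α : Type*} (X : Finset α) (N : ℕ) (hN : 1 ≤ N)
    (hX : X.card = N) (Y : Finset (Finset α)) (hYX : ∀ A ∈ Y, A ⊆ X)
    (hY : ∀ A ∈ Y, ∀ B ∈ Y, A ≠ B → ¬ A ⊆ B ∧ ¬ B ⊆ A) :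
    (Y.card : ℝ) ≤ 2 ^ N / Real.sqrt N := by
  classical
  -- transfer to the subtype of X
  set f : Finset α → Finset {x // x ∈ X} := fun A => A.subtype (· ∈ X) with hf
  have hrec : ∀ A ∈ Y, (f A).map (Function.Embedding.subtype _) = A := by
    intro A hA
    rw [hf]
    simp only [Finset.subtype_map]
    exact Finset.filter_true_of_mem fun x hx => hYX A hA hx
  have hinj : Set.InjOn f Y := by
    intro A hA B hB hAB
    have := congrArg (Finset.map (Function.Embedding.subtype _)) hAB
    rwa [hrec A hA, hrec B hB] at this
  set 𝒜 : Finset (Finset {x // x ∈ X}) := Y.image f with h𝒜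
  have hcard : 𝒜.card = Y.card := Finset.card_image_of_injOn hinj
  have hanti : IsAntichain (· ⊆ ·) (𝒜 : Set (Finset {x // x ∈ X})) := by
    intro a ha b hb hab hsub
    simp only [h𝒜, Finset.coe_image, Set.mem_image, Finset.mem_coe] at ha hb
    obtain ⟨A, hA, rfl⟩ := ha
    obtain ⟨B, hB, rfl⟩ := hb
    have hAB : A ≠ B := fun h => hab (by rw [h])
    have hsub' : A ⊆ B := by
      have := (Finset.map_subset_map (f := Function.Embedding.subtype (· ∈ X))).mpr hsub
      rwa [hrec A hA, hrec B hB] at this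
    exact (hY A hA B hB hAB).1 hsub'
  have hcardα : Fintype.card {x // x ∈ X} = N := by
    rw [Fintype.card_coe, hX]
  have hsperner := IsAntichain.sperner hanti
  rw [hcardα, hcard] at hsperner
  -- now the analytic part
  have hsqrt : (0:ℝ) < Real.sqrt N := Real.sqrt_pos.mpr (by exact_mod_cast hN)
  rw [le_div_iff₀ hsqrt]
  have hle : (Y.card : ℝ) ≤ (N.choose (N / 2) : ℝ) := by exact_mod_cast hsperner
  have hsq : ((N.choose (N / 2) : ℝ) * Real.sqrt N) ^ 2 ≤ ((2:ℝ) ^ N) ^ 2 := by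
    rw [mul_pow, Real.sq_sqrt (by positivity)]
    have : ((2:ℝ) ^ N) ^ 2 = (4:ℝ) ^ N := by
      rw [← pow_mul, mul_comm, pow_mul]; norm_num
    rw [this]
    have := key_nat N
    have hcast : ((N : ℝ)) * (N.choose (N / 2) : ℝ) ^ 2 ≤ (4:ℝ) ^ N := by exact_mod_cast this
    linarith
  have hmain : (N.choose (N / 2) : ℝ) * Real.sqrt N ≤ (2:ℝ) ^ N := by
    have h0 : (0:ℝ) ≤ (N.choose (N / 2) : ℝ) * Real.sqrt N := by positivity
    have h1 : (0:ℝ) ≤ (2:ℝ) ^ N := by positivity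
    nlinarith [hsq]
  calc (Y.card : ℝ) * Real.sqrt N ≤ (N.choose (N / 2) : ℝ) * Real.sqrt N :=
        mul_le_mul_of_nonneg_right hle (le_of_lt hsqrt)
    _ ≤ (2:ℝ) ^ N := hmain

end URM
end

section
/- Let G be a finite simple graph with a vertex cover X of size t ≥ 1, and let I = V(G) \ X (so I is an independent set). Suppose that for every two distinct vertices u, v ∈ I, neither N(u) ⊆ N(v) nor N(v) ⊆ N(u), where N(w) denotes the neighborhood of w in G. Then |I| ≤ 2^t / √t, and consequently |V(G)| ≤ t + 2^t / √t. -/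
namespace URM

open SimpleGraph

variable {V : Type*}

lemma key (n : ℕ) : (Nat.centralBinom n)^2 * (3*n+1) ≤ 16^n := by
  induction n with
  | zero => simp [Nat.centralBinom]
  | succ n ih =>
    have h := Nat.succ_mul_centralBinom_succ n
    have hpos : 0 < 3*n+1 := by omega
    have step : (2*(2*n+1))^2 * (3*(n+1)+1) ≤ 16 * (n+1)^2 * (3*n+1) := by nlinarith
    have : (n+1)^2 * ((Nat.centralBinom (n+1))^2 * (3*(n+1)+1)) ≤ (n+1)^2 * 16^(n+1) := by
      calc (n+1)^2 * ((Nat.centralBinom (n+1))^2 * (3*(n+1)+1))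
          = ((n+1) * Nat.centralBinom (n+1))^2 * (3*(n+1)+1) := by ring
        _ = (2*(2*n+1))^2 * (3*(n+1)+1) * (Nat.centralBinom n)^2 := by rw [h]; ring
        _ ≤ 16 * (n+1)^2 * (3*n+1) * (Nat.centralBinom n)^2 :=
            Nat.mul_le_mul_right _ step
        _ = 16 * (n+1)^2 * ((Nat.centralBinom n)^2 * (3*n+1)) := by ring
        _ ≤ 16 * (n+1)^2 * 16^n := Nat.mul_le_mul_left _ ih
        _ = (n+1)^2 * 16^(n+1) := by ring
    exact Nat.le_of_mul_le_mul_left this (by positivity)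

lemma key2 (t : ℕ) : (t.choose (t/2))^2 * t ≤ 4^t := by
  rcases Nat.even_or_odd t with ⟨n, hn⟩ | ⟨n, hn⟩
  · subst hn
    have h1 : (n+n)/2 = n := by omega
    have h2 : (n+n).choose n = Nat.centralBinom n := by
      rw [Nat.centralBinom]; congr 1; omega
    rw [h1, h2]
    calc (Nat.centralBinom n)^2 * (n+n) ≤ (Nat.centralBinom n)^2 * (3*n+1) := by
          apply Nat.mul_le_mul_left; omega
      _ ≤ 16^n := key n
      _ = 4^(n+n) := by rw [show (16:ℕ) = 4^2 from rfl, ← pow_mul]; congr 1; omega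
  · subst hn
    have h1 : (2*n+1)/2 = n := by omega
    rw [h1]
    have hs : (2*n+1).choose n * (n+1) = (2*n+1) * Nat.centralBinom n := by
      have hth := Nat.add_one_mul_choose_eq (2*n) n
      have hsym : (2*n+1).choose (n+1) = (2*n+1).choose n := by
        rw [← Nat.choose_symm (by omega)]; congr 1; omega
      rw [hsym] at hth
      rw [Nat.centralBinom]
      omega
    have goal' : ((2*n+1).choose n)^2 * (2*n+1) * (n+1)^2 ≤ 4^(2*n+1) * (n+1)^2 := by
      calc ((2*n+1).choose n)^2 * (2*n+1) * (n+1)^2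
          = ((2*n+1).choose n * (n+1))^2 * (2*n+1) := by ring
        _ = (2*n+1)^3 * (Nat.centralBinom n)^2 := by rw [hs]; ring
        _ ≤ 4*(n+1)^2*(3*n+1) * (Nat.centralBinom n)^2 := by
            apply Nat.mul_le_mul_right; nlinarith
        _ = 4*(n+1)^2 * ((Nat.centralBinom n)^2 * (3*n+1)) := by ring
        _ ≤ 4*(n+1)^2 * 16^n := Nat.mul_le_mul_left _ (key n)
        _ = 4^(2*n+1) * (n+1)^2 := by
            rw [show (16:ℕ) = 4^2 from rfl, ← pow_mul, pow_succ]
            ring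
    exact Nat.le_of_mul_le_mul_right goal' (by positivity)

lemma key3 (t : ℕ) (ht : 1 ≤ t) : ((t.choose (t/2)) : ℝ) ≤ 2^t / Real.sqrt t := by
  have htpos : (0:ℝ) < Real.sqrt t := Real.sqrt_pos.mpr (by exact_mod_cast ht)
  rw [le_div_iff₀ htpos]
  have : ((t.choose (t/2)) : ℝ) * Real.sqrt t = Real.sqrt ((t.choose (t/2))^2 * t) := by
    rw [Real.sqrt_mul (by positivity), Real.sqrt_sq (by positivity)]
  rw [this]
  have h4 : ((t.choose (t/2))^2 * t : ℝ) ≤ 4^t := by exact_mod_cast key2 t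
  calc Real.sqrt ((t.choose (t/2))^2 * t) ≤ Real.sqrt (4^t) := Real.sqrt_le_sqrt h4
    _ = 2^t := by
        rw [show ((4:ℝ)^t) = (2^t)^2 by
            rw [show (4:ℝ) = 2^2 by norm_num, ← pow_mul, ← pow_mul, Nat.mul_comm],
          Real.sqrt_sq (by positivity)]

/-- if `X` is a vertex cover of size `t ≥ 1` and the vertices outside `X` have
pairwise incomparable neighborhoods, then there are at most `2^t / √t` vertices outside `X`,
and hence at most `t + 2^t / √t` vertices in all. -/
theorem independent_set_bound {V : Type*} [Fintype V] (G : SimpleGraph V) (X : Set V)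
    (t : ℕ) (ht : 1 ≤ t) (hXcard : X.ncard = t)
    (hvc : ∀ ⦃u v : V⦄, G.Adj u v → u ∈ X ∨ v ∈ X)
    (hinc : ∀ u ∈ Xᶜ, ∀ v ∈ Xᶜ, u ≠ v →
      ¬ G.neighborSet u ⊆ G.neighborSet v ∧ ¬ G.neighborSet v ⊆ G.neighborSet u) :
    ((Xᶜ : Set V).ncard : ℝ) ≤ 2 ^ t / Real.sqrt t ∧
      (Fintype.card V : ℝ) ≤ t + 2 ^ t / Real.sqrt t := by
  classical
  -- neighborhoods of vertices outside X lie in X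
  have hNsub : ∀ u ∈ Xᶜ, G.neighborSet u ⊆ X := by
    intro u hu v hv
    rcases hvc hv with h | h
    · exact absurd h hu
    · exact h
  set f : V → Finset ↥X := fun u => Finset.univ.filter (fun x : ↥X => G.Adj u ↑x) with hf
  -- f determines the neighborhood for u ∈ Xᶜ
  have hfN : ∀ u ∈ Xᶜ, ∀ v : V, v ∈ G.neighborSet u ↔ ∃ h : v ∈ X, (⟨v, h⟩ : ↥X) ∈ f u := by
    intro u hu v
    constructor
    · intro hv
      exact ⟨hNsub u hu hv, by simp only [hf, Finset.mem_filter, Finset.mem_univ, true_and]; exact hv⟩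
    · rintro ⟨h, hm⟩
      simp only [hf, Finset.mem_filter] at hm
      exact hm.2
  have hmono : ∀ u ∈ Xᶜ, ∀ v ∈ Xᶜ, f u ⊆ f v → G.neighborSet u ⊆ G.neighborSet v := by
    intro u hu v hvX hsub w hw
    rcases (hfN u hu w).mp hw with ⟨hwX, hm⟩
    exact (hfN v hvX w).mpr ⟨hwX, hsub hm⟩
  have hinj : Set.InjOn f Xᶜ := by
    intro u hu v hv huv
    by_contra hne
    exact (hinc u hu v hv hne).1 (hmono u hu v hv (subset_of_eq huv))
  set 𝒜 : Finset (Finset ↥X) := (Xᶜ : Set V).toFinset.image f with h𝒜def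
  have hanti : IsAntichain (· ⊆ ·) (𝒜 : Set (Finset ↥X)) := by
    intro a ha b hb hab hsub
    simp only [h𝒜def, Finset.coe_image, Set.mem_image, Finset.mem_coe,
      Set.mem_toFinset] at ha hb
    obtain ⟨u, hu, rfl⟩ := ha
    obtain ⟨v, hv, rfl⟩ := hb
    have hne : u ≠ v := fun h => hab (by rw [h])
    exact (hinc u hu v hv hne).1 (hmono u hu v hv hsub)
  have hcard𝒜 : 𝒜.card = (Xᶜ : Set V).ncard := by
    rw [h𝒜def, Finset.card_image_of_injOn (by simpa using hinj)]
    rw [Set.ncard_eq_toFinset_card']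
  have hcardX : Fintype.card ↥X = t := by
    rw [← hXcard, Set.ncard_eq_toFinset_card', Set.toFinset_card]
  have hsperner := IsAntichain.sperner hanti
  rw [hcardX, hcard𝒜] at hsperner
  have hb : ((Xᶜ : Set V).ncard : ℝ) ≤ 2 ^ t / Real.sqrt t := by
    calc ((Xᶜ : Set V).ncard : ℝ) ≤ (t.choose (t/2) : ℝ) := by exact_mod_cast hsperner
      _ ≤ 2 ^ t / Real.sqrt t := key3 t ht
  refine ⟨hb, ?_⟩
  have hsplit : Fintype.card V = X.ncard + (Xᶜ : Set V).ncard := by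
    rw [← Nat.card_eq_fintype_card, ← Set.ncard_add_ncard_compl X]
  rw [hsplit, hXcard]
  push_cast
  linarith

end URM
end

section
/- Let H be a simple graph and let ℓ be a positive integer. Suppose H contains ℓ pairwise edge-disjoint paths W₁, …, W_ℓ, each of length 2, such that the union ⋃_{i∈[ℓ]} W_i is a forest and no two distinct paths W_i and W_j (i ≠ j) together form an edge-induced subgraph of H isomorphic to K_{1,4}. Then the line graph L(H) has a uniquely restricted matching of size ℓ, namely the matching whose i-th edge joins the two vertices of L(H) corresponding to the two edges of W_i. -/
set_option maxHeartbeats 1600000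

namespace URM

open SimpleGraph

variable {V : Type*}

section Aux
variable {G : SimpleGraph V}

/-- In a path ending at `v`, an edge containing `v` must be the last edge. -/
lemma getLast_edge_of_isPath {x v w : V} (q : G.Walk x v) (hq : q.IsPath)
    (hw : s(v, w) ∈ q.edges) : q.edges.getLast? = some s(v, w) := by
  induction q with
  | nil => simp at hw
  | @cons xx yy vv h' r ih =>
    rw [Walk.edges_cons] at hw
    have hr : r.IsPath := hq.of_cons
    rcases List.mem_cons.mp hw with heq | hmem
    · have hv : vv = xx ∨ vv = yy := by
        have : vv ∈ s(xx, yy) := heq ▸ (Sym2.mem_mk_left vv w)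
        simpa using this
      have hxx : xx ∉ r.support := ((Walk.cons_isPath_iff h' r).mp hq).2
      have hvend : vv ∈ r.support := r.end_mem_support
      rcases hv with hv | hv
      · exact absurd (hv ▸ hvend) hxx
      · subst hv
        have : r = Walk.nil := Walk.isPath_iff_eq_nil.mp hr
        subst this
        simpa using heq.symm
    · have hlq := ih hr hmem
      rw [Walk.edges_cons]
      rcases he : r.edges with _ | ⟨e0, es⟩
      · rw [he] at hmem; simp at hmem
      · rw [he] at hlq
        rw [List.getLast?_cons_cons, hlq]

/-- Extending a path by an edge which is not the reversal of its last edge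
yields a path, in an acyclic graph. -/
lemma concat_isPath_of_acyclic (hG : G.IsAcyclic) {u v w : V}
    (p : G.Walk u v) (hp : p.IsPath) (h : G.Adj v w)
    (hlast : p.edges.getLast? ≠ some s(v, w)) : (p.concat h).IsPath := by
  classical
  by_cases hw : w ∈ p.support
  · exfalso
    set q := p.dropUntil w hw with hqdef
    have hq : q.IsPath := hp.dropUntil hw
    have hqe : s(v, w) ∉ q.edges := by
      intro hmem
      have hlq : q.edges.getLast? = some s(v, w) := getLast_edge_of_isPath q hq hmem
      have hsplit : p.edges = (p.takeUntil w hw).edges ++ q.edges := by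
        conv_lhs => rw [← p.take_spec hw]
        rw [Walk.edges_append]
      have : p.edges.getLast? = some s(v, w) := by
        rw [hsplit, List.getLast?_append, hlq]
        rfl
      exact hlast this
    have hcyc : (q.concat h).IsCycle := by
      constructor
      constructor
      · constructor
        rw [Walk.edges_concat]
        exact List.Nodup.concat hqe hq.isTrail.edges_nodup
      · exact q.concat_ne_nil h
      · rw [Walk.support_concat]
        have hsup : q.support.Nodup := hp.dropUntil hw |>.support_nodup
        obtain ⟨l, hl⟩ : ∃ l, q.support = w :: l := ⟨q.support.tail, q.support_eq_cons⟩
        rw [hl]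
        rw [hl] at hsup
        simp only [List.concat_eq_append, List.cons_append, List.tail_cons]
        rw [List.nodup_append]
        refine ⟨(List.nodup_cons.mp hsup).2, List.nodup_singleton w, ?_⟩
        intro x hx
        simp only [List.mem_singleton]
        rintro _ rfl rfl
        exact (List.nodup_cons.mp hsup).1 hx
    exact hG (q.concat h) hcyc
  · rw [Walk.isPath_def, Walk.support_concat]
    rw [List.nodup_append]
    exact ⟨hp.support_nodup, List.nodup_singleton w, by
      intro x hx
      simp only [List.mem_singleton]
      rintro _ rfl rfl
      exact hw hx⟩


/-- There is no infinite non-backtracking walk within a finite vertex set in an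
acyclic graph. -/
lemma no_infinite_nonbacktracking (hG : G.IsAcyclic) (T : Set V) (hT : T.Finite)
    (u : ℕ → V) (hadj : ∀ k, G.Adj (u k) (u (k + 1)))
    (hnb : ∀ k, s(u (k + 1), u (k + 2)) ≠ s(u k, u (k + 1)))
    (hmem : ∀ k, u k ∈ T) : False := by
  classical
  -- the walk of length k
  let W : (k : ℕ) → G.Walk (u 0) (u k) := fun k =>
    Nat.rec Walk.nil (fun k p => p.concat (hadj k)) k
  have hWsucc : ∀ k, W (k + 1) = (W k).concat (hadj k) := fun k => rfl
  have hedges : ∀ k, (W k).edges = (List.range k).map (fun t => s(u t, u (t + 1))) := by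
    intro k
    induction k with
    | zero => simp [W]
    | succ k ih =>
      rw [hWsucc, Walk.edges_concat, ih, List.range_succ, List.map_append]
      simp
  have hsupp : ∀ k, (W k).support = (List.range (k + 1)).map u := by
    intro k
    induction k with
    | zero => simp [W, List.range_succ]
    | succ k ih =>
      rw [hWsucc, Walk.support_concat, ih, List.range_succ (n := k + 1), List.map_append]
      simp
  have hpath : ∀ k, (W k).IsPath := by
    intro k
    induction k with
    | zero => simp [W]
    | succ k ih =>
      rw [hWsucc]
      apply concat_isPath_of_acyclic hG _ ih
      rw [hedges]
      cases k with
      | zero => simp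
      | succ k' =>
        rw [List.range_succ, List.map_append, List.getLast?_append]
        simp only [List.map_cons, List.map_nil, List.getLast?_singleton]
        intro hc
        have : (some s(u k', u (k' + 1))).or
            ((List.map (fun t => s(u t, u (t + 1))) (List.range k')).getLast?) =
            some s(u k', u (k' + 1)) := rfl
        rw [this] at hc
        exact hnb k' (by injection hc with h'; exact h'.symm)
  -- cardinality contradiction
  set n := hT.toFinset.card with hn
  have hnodup : ((List.range (n + 1)).map u).Nodup := by
    have := (hpath n).support_nodup
    rwa [hsupp] at this
  have hsub : ((List.range (n + 1)).map u).toFinset ⊆ hT.toFinset := by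
    intro x hx
    rw [List.mem_toFinset] at hx
    obtain ⟨t, _, rfl⟩ := List.mem_map.mp hx
    simpa using hmem t
  have hcard : ((List.range (n + 1)).map u).toFinset.card = n + 1 := by
    rw [List.toFinset_card_of_nodup hnodup, List.length_map, List.length_range]
  have := Finset.card_le_card hsub
  omega


set_option maxHeartbeats 2000000 in
lemma middle_ne {H : SimpleGraph V} {ai bi ci aj bj cj : V}
    (hPi : IsPath2 H ai bi ci) (hPj : IsPath2 H aj bj cj)
    (hd : Disjoint (path2Edges ai bi ci) (path2Edges aj bj cj))
    (hK : ¬ Nonempty ((edgeInduced H (path2Edges ai bi ci ∪ path2Edges aj bj cj)).coe ≃g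
      completeBipartiteGraph Unit (Fin 4))) :
    bi ≠ bj := by
  classical
  intro hbb
  apply hK
  subst hbb
  obtain ⟨hab, hbc, hac⟩ := hPi
  obtain ⟨hab', hbc', hac'⟩ := hPj
  have h1 : ai ≠ bi := hab.ne
  have h2 : ci ≠ bi := hbc.ne'
  have h3 : aj ≠ bi := hab'.ne
  have h4 : cj ≠ bi := hbc'.ne'
  have hdis := Set.disjoint_left.mp hd
  have haa : ai ≠ aj := fun h =>
    hdis (a := s(ai, bi)) (by simp [path2Edges]) (by simp [path2Edges, h])
  have hacj : ai ≠ cj := fun h => by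
    refine hdis (a := s(ai, bi)) (by simp [path2Edges]) ?_
    have : s(ai, bi) = s(bi, cj) := by rw [h, Sym2.eq_swap]
    simp [path2Edges, this]
  have hca : ci ≠ aj := fun h => by
    refine hdis (a := s(bi, ci)) (by simp [path2Edges]) ?_
    have : s(bi, ci) = s(aj, bi) := by rw [← h, Sym2.eq_swap]
    simp [path2Edges, this]
  have hcc : ci ≠ cj := fun h => by
    refine hdis (a := s(bi, ci)) (by simp [path2Edges]) ?_
    simp [path2Edges, h]
  set S' : Set (Sym2 V) := path2Edges ai bi ci ∪ path2Edges aj bi cj with hS'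
  set D := edgeInduced H S' with hD
  -- memberships
  have hmb : bi ∈ D.verts := ⟨s(ai, bi), ⟨by simp [hS', path2Edges], hab⟩, by simp⟩
  have hmai : ai ∈ D.verts := ⟨s(ai, bi), ⟨by simp [hS', path2Edges], hab⟩, by simp⟩
  have hmci : ci ∈ D.verts := ⟨s(bi, ci), ⟨by simp [hS', path2Edges], hbc⟩, by simp⟩
  have hmaj : aj ∈ D.verts := ⟨s(aj, bi), ⟨by simp [hS', path2Edges], hab'⟩, by simp⟩
  have hmcj : cj ∈ D.verts := ⟨s(bi, cj), ⟨by simp [hS', path2Edges], hbc'⟩, by simp⟩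
  have hvertcases : ∀ v ∈ D.verts, v = bi ∨ v = ai ∨ v = ci ∨ v = aj ∨ v = cj := by
    rintro v ⟨e, ⟨heS, -⟩, hve⟩
    rcases heS with (h | h) | (h | h) <;> rw [h] at hve <;>
      rcases Sym2.mem_iff.mp hve with rfl | rfl <;> tauto
  -- adjacency characterization
  have hadjchar : ∀ v w_ : V, D.Adj v w_ ↔
      ((v = bi ∧ (w_ = ai ∨ w_ = ci ∨ w_ = aj ∨ w_ = cj)) ∨
       ((v = ai ∨ v = ci ∨ v = aj ∨ v = cj) ∧ w_ = bi)) := by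
    intro v w_
    constructor
    · rintro ⟨hS, -⟩
      rcases hS with (h | h) | (h | h) <;>
        rcases Sym2.eq_iff.mp h with ⟨rfl, rfl⟩ | ⟨rfl, rfl⟩ <;> tauto
    · have hm1 : s(ai, bi) ∈ S' := by simp [hS', path2Edges]
      have hm2 : s(bi, ci) ∈ S' := by simp [hS', path2Edges]
      have hm3 : s(aj, bi) ∈ S' := by simp [hS', path2Edges]
      have hm4 : s(bi, cj) ∈ S' := by simp [hS', path2Edges]
      rintro (⟨rfl, hc⟩ | ⟨hc, rfl⟩)
      · rcases hc with rfl | rfl | rfl | rfl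
        · exact ⟨by rw [Sym2.eq_swap]; exact hm1, hab.symm⟩
        · exact ⟨hm2, hbc⟩
        · exact ⟨by rw [Sym2.eq_swap]; exact hm3, hab'.symm⟩
        · exact ⟨hm4, hbc'⟩
      · rcases hc with rfl | rfl | rfl | rfl
        · exact ⟨hm1, hab⟩
        · exact ⟨by rw [Sym2.eq_swap]; exact hm2, hbc.symm⟩
        · exact ⟨hm3, hab'⟩
        · exact ⟨by rw [Sym2.eq_swap]; exact hm4, hbc'.symm⟩
  -- the function
  let f : D.verts → Unit ⊕ Fin 4 := fun x =>
    if x.1 = bi then .inl () else if x.1 = ai then .inr 0 else if x.1 = ci then .inr 1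
      else if x.1 = aj then .inr 2 else .inr 3
  have hf_b : ∀ h, f ⟨bi, h⟩ = .inl () := fun h => by simp [f]
  have hf_ai : ∀ h, f ⟨ai, h⟩ = .inr 0 := fun h => by simp [f, h1]
  have hf_ci : ∀ h, f ⟨ci, h⟩ = .inr 1 := fun h => by simp [f, h2, hac.symm]
  have hf_aj : ∀ h, f ⟨aj, h⟩ = .inr 2 := fun h => by simp [f, h3, haa.symm, hca.symm]
  have hf_cj : ∀ h, f ⟨cj, h⟩ = .inr 3 := fun h => by
    simp [f, h4, hacj.symm, hcc.symm, hac'.symm]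
  let g : Unit ⊕ Fin 4 → D.verts := Sum.elim (fun _ => ⟨bi, hmb⟩)
    (fun t => if t = 0 then ⟨ai, hmai⟩ else if t = 1 then ⟨ci, hmci⟩
      else if t = 2 then ⟨aj, hmaj⟩ else ⟨cj, hmcj⟩)
  have hgf : Function.LeftInverse g f := by
    rintro ⟨v, hv⟩
    rcases hvertcases v hv with rfl | rfl | rfl | rfl | rfl
    · rw [hf_b]; rfl
    · rw [hf_ai]; rfl
    · rw [hf_ci]; rfl
    · rw [hf_aj]; rfl
    · rw [hf_cj]; rfl
  have hfg : Function.RightInverse g f := by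
    rintro (⟨⟩ | t)
    · exact hf_b _
    · fin_cases t
      · exact hf_ai _
      · exact hf_ci _
      · exact hf_aj _
      · exact hf_cj _
  have n1 : bi ≠ ai := h1.symm
  have n2 : bi ≠ ci := h2.symm
  have n3 : bi ≠ aj := h3.symm
  have n4 : bi ≠ cj := h4.symm
  have nac : ci ≠ ai := hac.symm
  have nac' : cj ≠ aj := hac'.symm
  have naa : aj ≠ ai := haa.symm
  have nacj : cj ≠ ai := hacj.symm
  have nca : aj ≠ ci := hca.symm
  have ncc : cj ≠ ci := hcc.symm
  refine ⟨⟨⟨f, g, hgf, hfg⟩, ?_⟩⟩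
  rintro ⟨v, hv⟩ ⟨w_, hw⟩
  show (completeBipartiteGraph Unit (Fin 4)).Adj (f _) (f _) ↔ D.coe.Adj _ _
  rw [Subgraph.coe_adj, hadjchar]
  rcases hvertcases v hv with rfl | rfl | rfl | rfl | rfl <;>
    rcases hvertcases w_ hw with rfl | rfl | rfl | rfl | rfl <;>
    simp only [hf_b, hf_ai, hf_ci, hf_aj, hf_cj] <;>
    simp_all [h1, h2, h3, h4, haa, hacj, hca, hcc, hac, hac', n1, n2, n3, n4, nac, nac', naa, nacj, nca, ncc]

end Aux

/-- if `H` contains `ℓ` pairwise edge-disjoint paths of length 2 whose union is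
a forest and no two of which together form an edge-induced subgraph isomorphic to `K_{1,4}`,
then `L(H)` has a uniquely restricted matching of size `ℓ`, namely the matching whose `i`-th
edge joins the two vertices of `L(H)` corresponding to the two edges of `Wᵢ`. -/
theorem line_graph_urm_of_paths (H : SimpleGraph V) (ℓ : ℕ) (hℓ : 0 < ℓ)
    (a b c : Fin ℓ → V)
    (hP : ∀ i, IsPath2 H (a i) (b i) (c i))
    (hdisj : ∀ i j, i ≠ j →
      Disjoint (path2Edges (a i) (b i) (c i)) (path2Edges (a j) (b j) (c j)))
    (hforest : (SimpleGraph.fromEdgeSet (⋃ i, path2Edges (a i) (b i) (c i))).IsAcyclic)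
    (hK : ∀ i j, i ≠ j →
      ¬ Nonempty ((edgeInduced H
          (path2Edges (a i) (b i) (c i) ∪ path2Edges (a j) (b j) (c j))).coe ≃g
        completeBipartiteGraph Unit (Fin 4))) :
    ∃ M : (H.lineGraph).Subgraph, IsUniquelyRestricted M ∧ M.edgeSet.ncard = ℓ ∧
      ∀ i, M.Adj ⟨s(a i, b i), (SimpleGraph.mem_edgeSet H).mpr (hP i).1⟩
        ⟨s(b i, c i), (SimpleGraph.mem_edgeSet H).mpr (hP i).2.1⟩ := by
  classical
  -- the edges of the paths, indexed by `Fin ℓ × Bool`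
  let E : Fin ℓ × Bool → Sym2 V := fun x => if x.2 then s(b x.1, c x.1) else s(a x.1, b x.1)
  have hEmem : ∀ x, E x ∈ H.edgeSet := by
    rintro ⟨i, (_ | _)⟩
    · exact (SimpleGraph.mem_edgeSet H).mpr (hP i).1
    · exact (SimpleGraph.mem_edgeSet H).mpr (hP i).2.1
  have hEpath : ∀ x, E x ∈ path2Edges (a x.1) (b x.1) (c x.1) := by
    rintro ⟨i, (_ | _)⟩ <;> simp [E, path2Edges]
  have hbmem : ∀ x, b x.1 ∈ E x := by
    rintro ⟨i, (_ | _)⟩ <;> simp [E]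
  have hEinj : Function.Injective E := by
    rintro ⟨i, si⟩ ⟨j, sj⟩ h
    by_cases hij : i = j
    · subst hij
      have hEf : E (i, false) = s(a i, b i) := rfl
      have hEt : E (i, true) = s(b i, c i) := rfl
      cases si <;> cases sj
      · rfl
      · exfalso
        rw [hEf, hEt] at h
        rcases Sym2.eq_iff.mp h with ⟨h1, h2⟩ | ⟨h1, h2⟩
        · exact (hP i).1.ne h1
        · exact (hP i).2.2 h1
      · exfalso
        rw [hEf, hEt] at h
        rcases Sym2.eq_iff.mp h with ⟨h1, h2⟩ | ⟨h1, h2⟩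
        · exact (hP i).1.ne h1.symm
        · exact (hP i).2.2 h2.symm
      · rfl
    · exfalso
      refine Set.disjoint_left.mp (hdisj i j hij) (hEpath (i, si)) ?_
      rw [show E (i, si) = E (j, sj) from h]
      exact hEpath (j, sj)
  let Ev : Fin ℓ × Bool → H.edgeSet := fun x => ⟨E x, hEmem x⟩
  have hEvinj : Function.Injective Ev := fun x y h => hEinj (congrArg Subtype.val h)
  have hbne : ∀ i j, i ≠ j → b i ≠ b j := fun i j hij =>
    middle_ne (hP i) (hP j) (hdisj i j hij) (hK i j hij)
  have hlg : ∀ x : Fin ℓ × Bool, (H.lineGraph).Adj (Ev x) (Ev (x.1, !x.2)) := by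
    intro x
    rw [lineGraph_adj_iff_exists]
    refine ⟨fun h => ?_, b x.1, hbmem x, hbmem (x.1, !x.2)⟩
    have := hEvinj h
    have h2 := congrArg Prod.snd this
    simp at h2
  let M : (H.lineGraph).Subgraph :=
  { verts := Set.range Ev
    Adj := fun p q => ∃ x, p = Ev x ∧ q = Ev (x.1, !x.2)
    adj_sub := by rintro p q ⟨x, rfl, rfl⟩; exact hlg x
    edge_vert := by rintro p q ⟨x, rfl, -⟩; exact ⟨x, rfl⟩
    symm := by
      constructor
      rintro p q ⟨x, rfl, rfl⟩
      exact ⟨(x.1, !x.2), rfl, by cases x with | mk i s => simp⟩ }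
  have hMmatch : M.IsMatching := by
    rintro p ⟨x, rfl⟩
    refine ⟨Ev (x.1, !x.2), ⟨x, rfl, rfl⟩, ?_⟩
    rintro q ⟨y, hy, rfl⟩
    have : y = x := hEvinj hy.symm
    rw [this]
  refine ⟨M, ⟨hMmatch, ?_⟩, ?_, ?_⟩
  · -- uniqueness
    intro M' hverts hM'
    have hvertsEv : ∀ x, Ev x ∈ M'.verts := fun x => by rw [hverts]; exact ⟨x, rfl⟩
    have hEU : ∀ x : Fin ℓ × Bool, ∃! q, M'.Adj (Ev x) q := fun x => hM' (hvertsEv x)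
    have hpq_adj : ∀ x, M'.Adj (Ev x) (hEU x).choose := fun x => (hEU x).choose_spec.1
    have hpq_uniq : ∀ x q, M'.Adj (Ev x) q → q = (hEU x).choose :=
      fun x q h => (hEU x).choose_spec.2 q h
    have hpq_mem : ∀ x, ∃ y, Ev y = (hEU x).choose := fun x => by
      have h1 : (hEU x).choose ∈ M'.verts := (hpq_adj x).snd_mem
      rw [hverts] at h1
      exact h1
    let pr : Fin ℓ × Bool → Fin ℓ × Bool := fun x => (hpq_mem x).choose
    have hprE : ∀ x, Ev (pr x) = (hEU x).choose := fun x => (hpq_mem x).choose_spec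
    have hpr_adj : ∀ x, M'.Adj (Ev x) (Ev (pr x)) := fun x => by
      rw [hprE x]; exact hpq_adj x
    have hpr_uniq : ∀ x y, M'.Adj (Ev x) (Ev y) → y = pr x := fun x y h =>
      hEvinj (((hprE x) ▸ hpq_uniq x _ h : Ev y = Ev (pr x)))
    have hpr_invol : ∀ x, pr (pr x) = x := fun x =>
      (hpr_uniq (pr x) x (hpr_adj x).symm).symm
    have hpr_ne : ∀ x, pr x ≠ x := by
      intro x h
      have h2 := hpr_adj x
      rw [h] at h2
      exact (H.lineGraph.loopless.irrefl _) (M'.adj_sub h2)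
    have hshare : ∀ x, ∃ v, v ∈ E x ∧ v ∈ E (pr x) := by
      intro x
      have h2 := M'.adj_sub (hpr_adj x)
      rw [lineGraph_adj_iff_exists] at h2
      exact h2.2
    let sb : Fin ℓ × Bool → Fin ℓ × Bool := fun x => (x.1, !x.2)
    have hsb_ne : ∀ x, sb x ≠ x := by
      intro x h
      have h2 := congrArg Prod.snd h
      simp [sb] at h2
    have hsb_invol : ∀ x, sb (sb x) = x := by
      intro x; cases x with | mk i s => simp [sb]
    have hcross : ∀ x, pr x ≠ sb x → (pr x).1 ≠ x.1 := by
      intro x hx h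
      have h2 : pr x = x ∨ pr x = sb x := by
        by_cases h3 : (pr x).2 = x.2
        · left; exact Prod.ext h h3
        · right
          refine Prod.ext h ?_
          show (pr x).2 = !x.2
          have hbool : ∀ (p q : Bool), p ≠ q → p = !q := by decide
          exact hbool _ _ h3
      rcases h2 with h2 | h2
      · exact hpr_ne x h2
      · exact hx h2
    have hkey : ∀ x, pr x = sb x := by
      by_contra hxc
      push_neg at hxc
      obtain ⟨x₀, hx₀⟩ := hxc
      have hclos_sb : ∀ x, pr x ≠ sb x → pr (sb x) ≠ sb (sb x) := by
        intro x hx h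
        rw [hsb_invol] at h
        apply hx
        calc pr x = pr (pr (sb x)) := by rw [h]
        _ = sb x := hpr_invol _
      have hclos_pr : ∀ x, pr x ≠ sb x → pr (pr x) ≠ sb (pr x) := by
        intro x hx h
        rw [hpr_invol] at h
        apply hx
        have h2 := congrArg sb h
        rw [hsb_invol] at h2
        exact h2.symm
      let st : ℕ → (Fin ℓ × Bool → Fin ℓ × Bool) := fun n => if Even n then sb else pr
      let z : ℕ → Fin ℓ × Bool := fun n => Nat.rec x₀ (fun n zn => st n zn) n
      have hz_succ : ∀ n, z (n + 1) = st n (z n) := fun n => rfl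
      have hst_invol : ∀ n x, st n (st n x) = x := by
        intro n x
        by_cases h : Even n <;> simp [st, h, hsb_invol, hpr_invol]
      have hzS : ∀ n, pr (z n) ≠ sb (z n) := by
        intro n
        induction n with
        | zero => exact hx₀
        | succ n ih =>
          rw [hz_succ]
          by_cases h : Even n
          · simpa [st, h] using hclos_sb _ ih
          · simpa [st, h] using hclos_pr _ ih
      have hz1 : ∀ n, z (n + 1) ≠ z n := by
        intro n
        rw [hz_succ]
        by_cases h : Even n
        · simp only [st, if_pos h]; exact hsb_ne _
        · simp only [st, if_neg h]; exact hpr_ne _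
      have hz2 : ∀ n, z (n + 2) ≠ z n := by
        intro n h
        have h2 : st (n + 1) (z (n + 2)) = st (n + 1) (z n) := by rw [h]
        rw [hz_succ (n + 1), hst_invol] at h2
        rw [hz_succ n] at h2
        by_cases hev : Even n
        · have hev1 : ¬ Even (n + 1) := by simp [Nat.even_add_one, hev]
          rw [show st n = sb from by simp [st, hev],
            show st (n + 1) = pr from by simp [st, hev1]] at h2
          exact hzS n h2.symm
        · have hev1 : Even (n + 1) := by simp [Nat.even_add_one, hev]
          rw [show st n = pr from by simp [st, hev],
            show st (n + 1) = sb from by simp [st, hev1]] at h2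
          exact hzS n h2
      have hz3 : ∀ n, z (n + 3) ≠ z n := by
        intro n h
        have h2 : st (n + 2) (z (n + 3)) = st (n + 2) (z n) := by rw [h]
        rw [hz_succ (n + 2), hst_invol] at h2
        have hpar : st (n + 2) = st n := by
          have hiff : Even (n + 2) ↔ Even n := by simp [Nat.even_add_one, parity_simps]
          by_cases hev : Even n
          · rw [show st (n + 2) = sb from by simp [st, hiff.mpr hev],
              show st n = sb from by simp [st, hev]]
          · have hev2 : ¬ Even (n + 2) := fun hh => hev (hiff.mp hh)
            rw [show st (n + 2) = pr from by simp [st, hev2],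
              show st n = pr from by simp [st, hev]]
        rw [hpar, ← hz_succ n] at h2
        exact hz1 (n + 1) h2
      have hzgap : ∀ t d, (d = 1 ∨ d = 2 ∨ d = 3) → z (t + d) ≠ z t := by
        rintro t d (rfl | rfl | rfl)
        exacts [hz1 t, hz2 t, hz3 t]
      let cc : ℕ → V := fun n => if h : Even n then b (z n).1 else (hshare (z n)).choose
      have hcc1 : ∀ n, cc n ∈ E (z n) ∧ cc n ∈ E (z (n + 1)) := by
        intro n
        by_cases h : Even n
        · constructor
          · simp only [cc, dif_pos h]; exact hbmem _
          · simp only [cc, dif_pos h]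
            rw [hz_succ n, show st n = sb from by simp [st, h]]
            exact hbmem (sb (z n))
        · simp only [cc, dif_neg h]
          have hsp := (hshare (z n)).choose_spec
          refine ⟨hsp.1, ?_⟩
          rw [hz_succ n, show st n = pr from by simp [st, h]]
          exact hsp.2
      have hcc_even : ∀ n, Even n → cc n ≠ cc (n + 2) := by
        intro n hev
        have hev2 : Even (n + 2) := by simp [Nat.even_add_one, parity_simps, hev]
        simp only [cc, dif_pos hev, dif_pos hev2]
        have h1 : z (n + 1) = sb (z n) := by
          rw [hz_succ n, show st n = sb from by simp [st, hev]]
        have hno : ¬ Even (n + 1) := by simp [Nat.even_add_one, hev]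
        have h2 : z (n + 2) = pr (z (n + 1)) := by
          rw [hz_succ (n + 1), show st (n + 1) = pr from by simp [st, hno]]
        have h3 := hcross (z (n + 1)) (hzS (n + 1))
        rw [← h2, h1] at h3
        exact hbne _ _ (fun hh => h3 (by rw [hh]))
      have hrun : ∀ n, ¬ (cc n = cc (n + 1) ∧ cc (n + 1) = cc (n + 2) ∧
          cc (n + 2) = cc (n + 3)) := by
        rintro n ⟨e1, e2, e3⟩
        by_cases hev : Even n
        · exact hcc_even n hev (e1.trans e2)
        · exact hcc_even (n + 1) (by simp [Nat.even_add_one, hev]) (e2.trans e3)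
      let m : ℕ → ℕ := fun k => Nat.rec 0 (fun _ mk =>
        if cc (mk + 1) ≠ cc mk then mk + 1
          else if cc (mk + 2) ≠ cc mk then mk + 2 else mk + 3) k
      have hm_succ : ∀ k, m (k + 1) =
          (if cc (m k + 1) ≠ cc (m k) then m k + 1
            else if cc (m k + 2) ≠ cc (m k) then m k + 2 else m k + 3) := fun k => rfl
      have hm_d : ∀ k, ∃ d, (d = 1 ∨ d = 2 ∨ d = 3) ∧ m (k + 1) = m k + d := by
        intro k
        rw [hm_succ]
        split_ifs
        exacts [⟨1, Or.inl rfl, rfl⟩, ⟨2, Or.inr (Or.inl rfl), rfl⟩,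
          ⟨3, Or.inr (Or.inr rfl), rfl⟩]
      have hm_ne : ∀ k, cc (m (k + 1)) ≠ cc (m k) := by
        intro k
        rw [hm_succ]
        split_ifs with h1 h2
        · exact h1
        · exact h2
        · intro h3
          rw [not_not] at h1 h2
          exact hrun (m k) ⟨h1.symm, h1.trans h2.symm, h2.trans h3.symm⟩
      have hm_lastconst : ∀ k, cc (m (k + 1) - 1) = cc (m k) := by
        intro k
        rw [hm_succ]
        split_ifs with h1 h2
        · simp
        · simpa using not_not.mp h1
        · simpa using not_not.mp h2
      have hm_pos : ∀ k, 1 ≤ m (k + 1) := by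
        intro k
        obtain ⟨d, hd, h⟩ := hm_d k
        rcases hd with rfl | rfl | rfl <;> omega
      let u : ℕ → V := fun k => cc (m k)
      have hune : ∀ k, u (k + 1) ≠ u k := fun k => hm_ne k
      have hmem2 : ∀ k, u k ∈ E (z (m (k + 1))) ∧ u (k + 1) ∈ E (z (m (k + 1))) := by
        intro k
        constructor
        · have h1 := (hcc1 (m (k + 1) - 1)).2
          rw [Nat.sub_add_cancel (hm_pos k)] at h1
          show cc (m k) ∈ _
          rw [← hm_lastconst k]
          exact h1
        · exact (hcc1 (m (k + 1))).1
      have hDk : ∀ k, s(u k, u (k + 1)) = E (z (m (k + 1))) := by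
        intro k
        exact ((Sym2.mem_and_mem_iff (hune k).symm).mp
          ⟨(hmem2 k).1, (hmem2 k).2⟩).symm
      have hFadj : ∀ k, (SimpleGraph.fromEdgeSet
          (⋃ i, path2Edges (a i) (b i) (c i))).Adj (u k) (u (k + 1)) := by
        intro k
        rw [SimpleGraph.fromEdgeSet_adj]
        refine ⟨?_, (hune k).symm⟩
        rw [hDk k]
        exact Set.mem_iUnion.mpr ⟨(z (m (k + 1))).1, hEpath _⟩
      have hnb : ∀ k, s(u (k + 1), u (k + 2)) ≠ s(u k, u (k + 1)) := by
        intro k h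
        rw [hDk k, hDk (k + 1)] at h
        have h2 := hEinj h
        obtain ⟨d, hd, hmd⟩ := hm_d (k + 1)
        rw [hmd] at h2
        exact hzgap (m (k + 1)) d hd h2
      have hTfin : (⋃ i : Fin ℓ, ({a i, b i, c i} : Set V)).Finite :=
        Set.finite_iUnion (fun i => (Set.finite_singleton (c i)).insert (b i) |>.insert (a i))
      have hEvert : ∀ (x : Fin ℓ × Bool) (v : V), v ∈ E x →
          v ∈ ({a x.1, b x.1, c x.1} : Set V) := by
        rintro ⟨i, (_ | _)⟩ v hv <;> simp only [E] at hv <;>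
          rcases Sym2.mem_iff.mp hv with rfl | rfl <;> simp
      have hmemT : ∀ k, u k ∈ ⋃ i, ({a i, b i, c i} : Set V) := by
        intro k
        exact Set.mem_iUnion.mpr ⟨(z (m k)).1, hEvert _ _ (hcc1 (m k)).1⟩
      exact absurd (no_infinite_nonbacktracking hforest _ hTfin u hFadj hnb hmemT) (fun h => h)
    · have hM'Adj : ∀ x, M'.Adj (Ev x) (Ev (sb x)) := fun x => by
        rw [← hkey x]; exact hpr_adj x
      apply SimpleGraph.Subgraph.ext
      · exact hverts
      · funext p q
        apply propext
        constructor
        · intro h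
          have hp : p ∈ M'.verts := h.fst_mem
          rw [hverts] at hp
          obtain ⟨x, rfl⟩ := hp
          have hq : q ∈ M'.verts := h.snd_mem
          rw [hverts] at hq
          obtain ⟨y, rfl⟩ := hq
          have h2 : y = pr x := hpr_uniq x y h
          rw [hkey x] at h2
          subst h2
          exact ⟨x, rfl, rfl⟩
        · rintro ⟨x, rfl, rfl⟩
          exact hM'Adj x
  · -- cardinality
    have hedg : M.edgeSet = Set.range (fun i : Fin ℓ => s(Ev (i, false), Ev (i, true))) := by
      ext e
      induction e using Sym2.ind with
      | _ p q =>
        rw [SimpleGraph.Subgraph.mem_edgeSet]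
        constructor
        · rintro ⟨x, rfl, rfl⟩
          cases x with
          | mk i s =>
            cases s
            · exact ⟨i, rfl⟩
            · exact ⟨i, Sym2.eq_swap⟩
        · rintro ⟨i, h⟩
          rcases Sym2.eq_iff.mp h with ⟨h1, h2⟩ | ⟨h1, h2⟩
          · exact ⟨(i, false), h1.symm, h2.symm⟩
          · exact ⟨(i, true), h2.symm, h1.symm⟩
    rw [hedg]
    have hinj : Function.Injective (fun i : Fin ℓ => s(Ev (i, false), Ev (i, true))) := by
      intro i j h
      rcases Sym2.eq_iff.mp h with ⟨h1, -⟩ | ⟨h1, -⟩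
      · exact congrArg Prod.fst (hEvinj h1)
      · exact absurd (hEvinj h1) (by simp)
    rw [← Set.image_univ, Set.ncard_image_of_injective _ hinj]
    simp [Set.ncard_univ]
  · -- the prescribed edges
    intro i
    exact ⟨(i, false), Subtype.ext rfl, Subtype.ext rfl⟩

end URM
end
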